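/- arXiv:2507.11166 — 3 statements merged into one kernel-verified Lean document; each statement's English description precedes it below -/
import Mathlib

section
/- For every μ ∈ P(S²) that does not belong to 𝒜^{(2)}_bal, one has I^{(2)}(μ) = ∞; equivalently, lim_{δ→0} limsup_n (1/n) log ℙ(L_n ∈ B(μ,δ)) = −∞. -/
open Filter Topology Set MeasureTheory

namespace MCLD

noncomputable section

/-- Extended logarithm: `elog x = log x` for `x > 0`, and `⊥` otherwise. -/
def elog (x : ℝ) : EReal := if x ≤ 0 then (⊥ : EReal) else ((Real.log x : ℝ) : EReal)

/-- Probability measures on a countable (discrete) space, viewed as ℓ¹ probability vectors. -/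
structure ProbMeas (α : Type*) where
  toFun : α → ℝ
  nonneg' : ∀ a, 0 ≤ toFun a
  hasSum_one' : HasSum toFun 1

instance {α : Type*} : CoeFun (ProbMeas α) (fun _ => α → ℝ) := ⟨ProbMeas.toFun⟩

/-- The total-variation metric (half the ℓ¹ distance) on probability measures;
it metrizes the weak topology. -/
noncomputable instance {α : Type*} : MetricSpace (ProbMeas α) where
  dist μ ν := (∑' a, |μ.toFun a - ν.toFun a|) / 2
  dist_self μ := by simp
  dist_comm μ ν := by simp [abs_sub_comm]
  dist_triangle μ ν ξ := by
    show (∑' a, |μ.toFun a - ξ.toFun a|) / 2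
        ≤ (∑' a, |μ.toFun a - ν.toFun a|) / 2 + (∑' a, |ν.toFun a - ξ.toFun a|) / 2
    have sμν : Summable (fun a => |μ.toFun a - ν.toFun a|) :=
      (μ.hasSum_one'.summable.sub ν.hasSum_one'.summable).abs
    have sνξ : Summable (fun a => |ν.toFun a - ξ.toFun a|) :=
      (ν.hasSum_one'.summable.sub ξ.hasSum_one'.summable).abs
    have sμξ : Summable (fun a => |μ.toFun a - ξ.toFun a|) :=
      (μ.hasSum_one'.summable.sub ξ.hasSum_one'.summable).abs
    have h1 : (∑' a, |μ.toFun a - ξ.toFun a|)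
        ≤ ∑' a, (|μ.toFun a - ν.toFun a| + |ν.toFun a - ξ.toFun a|) :=
      Summable.tsum_le_tsum (fun a => abs_sub_le _ _ _) sμξ (sμν.add sνξ)
    have h2 : (∑' a, (|μ.toFun a - ν.toFun a| + |ν.toFun a - ξ.toFun a|))
        = (∑' a, |μ.toFun a - ν.toFun a|) + ∑' a, |ν.toFun a - ξ.toFun a| :=
      Summable.tsum_add sμν sνξ
    rw [h2] at h1
    linarith
  eq_of_dist_eq_zero := by
    rintro ⟨f, hf1, hf2⟩ ⟨g, hg1, hg2⟩ h
    have s : Summable (fun a => |f a - g a|) := (hf2.summable.sub hg2.summable).abs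
    have ht : (∑' a, |f a - g a|) = 0 := by
      have h' : (∑' a, |f a - g a|) / 2 = 0 := h
      rcases div_eq_zero_iff.mp h' with h'' | h''
      · exact h''
      · norm_num at h''
    have hz : ∀ a, f a = g a := by
      intro a
      have h1 : |f a - g a| ≤ 0 := ht ▸ Summable.le_tsum s a (fun b _ => abs_nonneg _)
      have h2 : |f a - g a| = 0 := le_antisymm h1 (abs_nonneg _)
      have h3 := abs_eq_zero.mp h2
      exact sub_eq_zero.mp h3
    have : f = g := funext hz
    subst this
    rfl

def IsProbFun {α : Type*} (f : α → ℝ) : Prop := (∀ a, 0 ≤ f a) ∧ HasSum f 1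

def Bdd {α : Type*} (V : α → ℝ) : Prop := ∃ c : ℝ, ∀ a, |V a| ≤ c

def BddPos {α : Type*} (f : α → ℝ) : Prop := ∃ c C : ℝ, 0 < c ∧ ∀ a, c ≤ f a ∧ f a ≤ C

variable {S : Type*} [Countable S] [DecidableEq S]

/-- The law `ℙ_{n+1}(u) = β(u₁) p(u₁,u₂) ⋯ p(u_n,u_{n+1})` of a word of length `n+1`. -/
def wordLaw (β : S → ℝ) (p : S → S → ℝ) {n : ℕ} (u : Fin (n + 1) → S) : ℝ :=
  β (u 0) * ∏ i : Fin n, p (u i.castSucc) (u i.succ)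

/-- The pair empirical measure `L_{m+1}[u]` of a word `u` of length `m+2`. -/
def pairEmp {m : ℕ} (u : Fin (m + 2) → S) : ProbMeas (S × S) :=
  ⟨fun z => (∑ i : Fin (m + 1), if (u i.castSucc, u i.succ) = z then (1 : ℝ) else 0) / (m + 1),
    fun z => div_nonneg (Finset.sum_nonneg fun i _ => by positivity) (by positivity),
    by
      have h : ∀ i : Fin (m + 1),
          HasSum (fun z : S × S => if (u i.castSucc, u i.succ) = z then (1 : ℝ) else 0) 1 := by
        intro i
        simpa [eq_comm] using hasSum_ite_eq (u i.castSucc, u i.succ) (1 : ℝ)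
      have h2 := hasSum_sum (f := fun (i : Fin (m + 1)) (z : S × S) =>
          if (u i.castSucc, u i.succ) = z then (1 : ℝ) else 0)
          (s := Finset.univ) (fun i _ => h i)
      have h3 := h2.div_const ((m : ℝ) + 1)
      have hd : (∑ _i : Fin (m + 1), (1 : ℝ)) / ((m : ℝ) + 1) = 1 := by
        rw [Finset.sum_const]
        simp only [Finset.card_univ, Fintype.card_fin, nsmul_eq_mul, mul_one]
        push_cast
        exact div_self (by positivity)
      rw [hd] at h3
      simpa using h3⟩

/-- `ℙ(L_n ∈ A)` for the pair empirical measures of the Markov chain. -/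
def pairProbSeq (β : S → ℝ) (p : S → S → ℝ) (A : Set (ProbMeas (S × S))) : ℕ → ℝ
  | 0 => 0
  | (m + 1) => ∑' u : Fin (m + 2) → S,
      Set.indicator {u : Fin (m + 2) → S | pairEmp u ∈ A} (fun u => wordLaw β p u) u

/-- The occupation (level-2) empirical measure `L^{(1)}_{m+1}[u]` of a word of length `m+1`. -/
def occEmp {m : ℕ} (u : Fin (m + 1) → S) : ProbMeas S :=
  ⟨fun x => (∑ i : Fin (m + 1), if u i = x then (1 : ℝ) else 0) / (m + 1),
    fun x => div_nonneg (Finset.sum_nonneg fun i _ => by positivity) (by positivity),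
    by
      have h : ∀ i : Fin (m + 1), HasSum (fun x : S => if u i = x then (1 : ℝ) else 0) 1 := by
        intro i
        simpa [eq_comm] using hasSum_ite_eq (u i) (1 : ℝ)
      have h2 := hasSum_sum (f := fun (i : Fin (m + 1)) (x : S) =>
          if u i = x then (1 : ℝ) else 0) (s := Finset.univ) (fun i _ => h i)
      have h3 := h2.div_const ((m : ℝ) + 1)
      have hd : (∑ _i : Fin (m + 1), (1 : ℝ)) / ((m : ℝ) + 1) = 1 := by
        rw [Finset.sum_const]
        simp only [Finset.card_univ, Fintype.card_fin, nsmul_eq_mul, mul_one]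
        push_cast
        exact div_self (by positivity)
      rw [hd] at h3
      simpa using h3⟩

/-- `ℙ(L^{(1)}_n ∈ A)` for the occupation measures of the Markov chain. -/
def occProbSeq (β : S → ℝ) (p : S → S → ℝ) (A : Set (ProbMeas S)) : ℕ → ℝ
  | 0 => 0
  | (m + 1) => ∑' u : Fin (m + 1) → S,
      Set.indicator {u : Fin (m + 1) → S | occEmp u ∈ A} (fun u => wordLaw β p u) u

/-- The weak large deviation principle with rate function `I` for a sequence of
random variables whose distributions are recorded by `prob : Set X → ℕ → ℝ`,
`prob A n = ℙ(Y_n ∈ A)`. -/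
def WeakLDP {X : Type*} [TopologicalSpace X] (prob : Set X → ℕ → ℝ) (I : X → EReal) : Prop :=
  (∀ x, 0 ≤ I x) ∧ LowerSemicontinuous I ∧
  (∀ K : Set X, IsCompact K →
      Filter.limsup (fun n : ℕ => ((n : ℝ)⁻¹ : EReal) * elog (prob K n)) Filter.atTop
        ≤ -(⨅ x ∈ K, I x)) ∧
  (∀ U : Set X, IsOpen U →
      -(⨅ x ∈ U, I x)
        ≤ Filter.liminf (fun n : ℕ => ((n : ℝ)⁻¹ : EReal) * elog (prob U n)) Filter.atTop)

/-- `x ⤳ y`: `y` is reachable from `x` through a path of positive transition probabilities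
(with at least one step). -/
def Reach (p : S → S → ℝ) (x y : S) : Prop :=
  ∃ n : ℕ, ∃ u : Fin (n + 2) → S, u 0 = x ∧ u (Fin.last (n + 1)) = y ∧
    ∀ i : Fin (n + 1), 0 < p (u i.castSucc) (u i.succ)

def MutualReach (p : S → S → ℝ) (C : Set S) : Prop := ∀ x ∈ C, ∀ y ∈ C, Reach p x y

/-- Irreducible classes: maximal sets on which `⤳` is mutual. -/
def IsIrredClass (p : S → S → ℝ) (C : Set S) : Prop :=
  C.Nonempty ∧ MutualReach p C ∧ ∀ C', MutualReach p C' → C ⊆ C' → C' = C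

def ClassReach (p : S → S → ℝ) (C C' : Set S) : Prop := ∃ x ∈ C, ∃ y ∈ C', Reach p x y

def BetaReachPt (β : S → ℝ) (p : S → S → ℝ) (y : S) : Prop :=
  0 < β y ∨ ∃ x, 0 < β x ∧ Reach p x y

def BetaReachClass (β : S → ℝ) (p : S → S → ℝ) (C : Set S) : Prop :=
  ∃ y ∈ C, BetaReachPt β p y

/-- `μ` gives positive mass to `C × C`, i.e. `C ∈ 𝒥_μ`. -/
def ChargesClass2 (μ : S × S → ℝ) (C : Set S) : Prop :=
  ∃ z : S × S, 0 < μ z ∧ z.1 ∈ C ∧ z.2 ∈ C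

/-- Admissibility of a (pair) measure: it is carried by the squares of the irreducible
classes, the charged classes are totally ordered by `⤳`, and each of them is reachable
from the initial distribution. -/
def Admissible2 (β : S → ℝ) (p : S → S → ℝ) (μ : S × S → ℝ) : Prop :=
  (∀ z : S × S, 0 < μ z → ∃ C, IsIrredClass p C ∧ z.1 ∈ C ∧ z.2 ∈ C) ∧
  (∀ C C', IsIrredClass p C → IsIrredClass p C' → ChargesClass2 μ C → ChargesClass2 μ C' →
      C = C' ∨ ClassReach p C C' ∨ ClassReach p C' C) ∧
  (∀ C, IsIrredClass p C → ChargesClass2 μ C → BetaReachClass β p C)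

def ChargesClass1 (μ : S → ℝ) (C : Set S) : Prop := ∃ x, 0 < μ x ∧ x ∈ C

def Admissible1 (β : S → ℝ) (p : S → S → ℝ) (μ : S → ℝ) : Prop :=
  (∀ x, 0 < μ x → ∃ C, IsIrredClass p C ∧ x ∈ C) ∧
  (∀ C C', IsIrredClass p C → IsIrredClass p C' → ChargesClass1 μ C → ChargesClass1 μ C' →
      C = C' ∨ ClassReach p C C' ∨ ClassReach p C' C) ∧
  (∀ C, IsIrredClass p C → ChargesClass1 μ C → BetaReachClass β p C)

/-- first marginal -/
def marg1 (μ : S × S → ℝ) : S → ℝ := fun x => ∑' y, μ (x, y)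

/-- second marginal -/
def marg2 (μ : S × S → ℝ) : S → ℝ := fun x => ∑' y, μ (y, x)

/-- A pair measure is balanced when its two marginals coincide. -/
def Balanced2 (μ : S × S → ℝ) : Prop := marg1 μ = marg2 μ

/-- Relative entropy `H(μ|ν) = Σ μ log(μ/ν)` (with `0 log 0 = 0`), equal to `⊤` when
`μ` is not absolutely continuous w.r.t. `ν` or the sum diverges. -/
def relEnt {α : Type*} (μ ν : α → ℝ) : EReal :=
  haveI := Classical.propDecidable
    ((∀ a, ν a = 0 → μ a = 0) ∧ Summable (fun a => μ a * Real.log (μ a / ν a)))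
  if (∀ a, ν a = 0 → μ a = 0) ∧ Summable (fun a => μ a * Real.log (μ a / ν a))
  then ((∑' a, μ a * Real.log (μ a / ν a) : ℝ) : EReal)
  else ⊤

/-- `R^{(2)}(μ) = H(μ | μ^{(1)} ⊗ p)`. -/
def R2 (p : S → S → ℝ) (μ : S × S → ℝ) : EReal :=
  relEnt μ (fun z => marg1 μ z.1 * p z.1 z.2)

/-- The Donsker–Varadhan entropy `J^{(2)}`. -/
def J2 (p : S → S → ℝ) (μ : S × S → ℝ) : EReal :=
  ⨆ f : {f : S × S → ℝ // BddPos f},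
    ((∑' z : S × S, μ z * Real.log (f.1 z / ∑' w : S, p z.2 w * f.1 (z.2, w)) : ℝ) : EReal)

/-- `E[exp(n ⟨L_n, V⟩); all letters in K]` for the pair empirical measure. -/
def pairGenIn (β : S → ℝ) (p : S → S → ℝ) (K : Set S) (V : S × S → ℝ) : ℕ → ℝ
  | 0 => 1
  | (m + 1) => ∑' u : Fin (m + 2) → S,
      Set.indicator {u : Fin (m + 2) → S | ∀ i, u i ∈ K}
        (fun u => wordLaw β p u *
          Real.exp (∑ i : Fin (m + 1), V (u i.castSucc, u i.succ))) u

/-- The scaled cumulant generating function `Λ^{(2)}`. -/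
def Lambda2 (β : S → ℝ) (p : S → S → ℝ) (V : S × S → ℝ) : EReal :=
  Filter.limsup (fun n : ℕ => ((n : ℝ)⁻¹ : EReal) * elog (pairGenIn β p Set.univ V n))
    Filter.atTop

/-- The truncated scaled cumulant generating function on a finite set `K`. -/
def Lambda2K (β : S → ℝ) (p : S → S → ℝ) (K : Set S) (V : S × S → ℝ) : EReal :=
  Filter.limsup (fun n : ℕ => ((n : ℝ)⁻¹ : EReal) * elog (pairGenIn β p K V n)) Filter.atTop

/-- `Λ^{(2)}_∞`. -/
def Lambda2inf (β : S → ℝ) (p : S → S → ℝ) (V : S × S → ℝ) : EReal :=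
  ⨆ K : Finset S, Lambda2K β p (↑K) V

def pairing2 (μ : S × S → ℝ) (V : S × S → ℝ) : ℝ := ∑' z, μ z * V z

/-- Convex conjugate (on bounded functions) of a functional on functions on `S²`. -/
def conjOn2 (Φ : (S × S → ℝ) → EReal) (μ : S × S → ℝ) : EReal :=
  ⨆ V : {V : S × S → ℝ // Bdd V}, (((pairing2 μ V.1 : ℝ) : EReal) - Φ V.1)

/-- `E[exp(Σ_{i=1}^n V(X_i))]`. -/
def occGen (β : S → ℝ) (p : S → S → ℝ) (V : S → ℝ) : ℕ → ℝ
  | 0 => 1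
  | (m + 1) => ∑' u : Fin (m + 1) → S, wordLaw β p u * Real.exp (∑ i, V (u i))

/-- The level-2 scaled cumulant generating function `Λ^{(1)}`. -/
def Lambda1 (β : S → ℝ) (p : S → S → ℝ) (V : S → ℝ) : EReal :=
  Filter.limsup (fun n : ℕ => ((n : ℝ)⁻¹ : EReal) * elog (occGen β p V n)) Filter.atTop

def pairing1 (μ : S → ℝ) (V : S → ℝ) : ℝ := ∑' x, μ x * V x

def conjOn1 (Φ : (S → ℝ) → EReal) (μ : S → ℝ) : EReal :=
  ⨆ V : {V : S → ℝ // Bdd V}, (((pairing1 μ V.1 : ℝ) : EReal) - Φ V.1)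

/-- The Donsker–Varadhan entropy `J^{(1)}`. -/
def J1 (p : S → S → ℝ) (μ : S → ℝ) : EReal :=
  ⨆ f : {f : S → ℝ // BddPos f},
    ((∑' x : S, μ x * Real.log (f.1 x / ∑' y : S, p x y * f.1 y) : ℝ) : EReal)

/-- `R^{(1)}(μ) = inf { R^{(2)}(ν) : ν balanced with marginal μ }`. -/
def R1 (p : S → S → ℝ) (μ : S → ℝ) : EReal :=
  ⨅ ν : {ν : ProbMeas (S × S) // Balanced2 ν.toFun ∧ marg1 ν.toFun = μ}, R2 p ν.1.toFun

/-- Marginal on the first `k` coordinates of a measure on words of length `k+1`. -/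
def margFirst {k : ℕ} (μ : (Fin (k + 1) → S) → ℝ) : (Fin k → S) → ℝ :=
  fun u => ∑' y : S, μ (Fin.snoc u y)

/-- Marginal on the last `k` coordinates of a measure on words of length `k+1`. -/
def margLast {k : ℕ} (μ : (Fin (k + 1) → S) → ℝ) : (Fin k → S) → ℝ :=
  fun u => ∑' y : S, μ (Fin.cons y u)

def BalancedK {k : ℕ} (μ : (Fin (k + 1) → S) → ℝ) : Prop := margFirst μ = margLast μ

/-- `R^{(k)}(μ) = H(μ | μ^{(k-1)} ⊗ p)` for a measure on words of length `k+2` (so `k+2 ≥ 2`). -/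
def Rk (p : S → S → ℝ) {k : ℕ} (μ : (Fin (k + 2) → S) → ℝ) : EReal :=
  relEnt μ (fun v => margFirst μ (Fin.init v) *
    p (v ((Fin.last k).castSucc)) (v (Fin.last (k + 1))))


/-! ### Auxiliary lemmas for `statement9` -/

section Statement9Aux

lemma reach_of_tg {p : S → S → ℝ} {x y : S}
    (h : Relation.TransGen (fun a b => 0 < p a b) x y) : Reach p x y := by
  induction h with
  | @single b hb =>
      refine ⟨0, ![x, b], rfl, rfl, fun i => ?_⟩
      fin_cases i
      simpa using hb
  | @tail b c hxb hbc ih =>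
      obtain ⟨n, u, h0, hl, hs⟩ := ih
      refine ⟨n + 1, Fin.snoc u c, ?_, ?_, ?_⟩
      · rw [show (0 : Fin (n + 3)) = (0 : Fin (n + 2)).castSucc from rfl, Fin.snoc_castSucc]
        exact h0
      · simp
      · intro i
        induction i using Fin.lastCases with
        | last =>
            rw [Fin.succ_last, Fin.snoc_last, Fin.snoc_castSucc, hl]
            exact hbc
        | cast j =>
            rw [Fin.succ_castSucc, Fin.snoc_castSucc, Fin.snoc_castSucc]
            exact hs j

lemma tg_aux {p : S → S → ℝ} (n : ℕ) :
    ∀ u : Fin (n + 2) → S, (∀ i : Fin (n + 1), 0 < p (u i.castSucc) (u i.succ)) →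
      Relation.TransGen (fun a b => 0 < p a b) (u 0) (u (Fin.last (n + 1))) := by
  induction n with
  | zero =>
      intro u hs
      have h := hs 0
      have e1 : ((0 : Fin 1).castSucc : Fin 2) = 0 := Fin.ext (by simp)
      have e2 : ((0 : Fin 1).succ : Fin 2) = Fin.last 1 := Fin.ext (by simp)
      rw [e1, e2] at h
      exact Relation.TransGen.single h
  | succ n ih =>
      intro u hs
      have ihv := ih (fun i => u i.castSucc) (fun i => by
        have h := hs i.castSucc; rw [Fin.succ_castSucc] at h; exact h)
      simp only [Fin.castSucc_zero] at ihv
      have hstep := hs (Fin.last (n + 1))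
      rw [Fin.succ_last] at hstep
      exact ihv.tail hstep

lemma tg_of_reach {p : S → S → ℝ} {x y : S} (h : Reach p x y) :
    Relation.TransGen (fun a b => 0 < p a b) x y := by
  obtain ⟨n, u, h0, hl, hs⟩ := h
  have := tg_aux n u hs
  rwa [h0, hl] at this

lemma tg_seg {p : S → S → ℝ} {m : ℕ} {u : Fin (m + 2) → S}
    (hs : ∀ i : Fin (m + 1), 0 < p (u i.castSucc) (u i.succ)) :
    ∀ b : ℕ, ∀ hb : b < m + 2, ∀ a : ℕ, ∀ ha : a < b,
      Relation.TransGen (fun s t => 0 < p s t) (u ⟨a, ha.trans hb⟩) (u ⟨b, hb⟩) := by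
  intro b
  induction b with
  | zero => intro hb a ha; exact absurd ha (Nat.not_lt_zero a)
  | succ b ih =>
      intro hb a ha
      have hb1 : b < m + 1 := by omega
      have hstep : 0 < p (u ⟨b, by omega⟩) (u ⟨b + 1, hb⟩) := by
        have h := hs ⟨b, hb1⟩
        have e1 : (⟨b, hb1⟩ : Fin (m + 1)).castSucc = (⟨b, by omega⟩ : Fin (m + 2)) :=
          Fin.ext (by simp)
        have e2 : (⟨b, hb1⟩ : Fin (m + 1)).succ = (⟨b + 1, hb⟩ : Fin (m + 2)) :=
          Fin.ext (by simp)
        rwa [e1, e2] at h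
      rcases Nat.lt_or_ge a b with h | h
      · exact (ih (by omega) a h).tail hstep
      · have hab : a = b := by omega
        subst hab
        exact Relation.TransGen.single hstep

lemma wordLaw_nonneg {β : S → ℝ} {p : S → S → ℝ} (hβ0 : ∀ x, 0 ≤ β x)
    (hp0 : ∀ x y, 0 ≤ p x y) {n : ℕ} (u : Fin (n + 1) → S) : 0 ≤ wordLaw β p u :=
  mul_nonneg (hβ0 _) (Finset.prod_nonneg fun _ _ => hp0 _ _)

lemma wordLaw_pos_parts {β : S → ℝ} {p : S → S → ℝ} (hβ0 : ∀ x, 0 ≤ β x)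
    (hp0 : ∀ x y, 0 ≤ p x y) {n : ℕ} {u : Fin (n + 1) → S} (h : 0 < wordLaw β p u) :
    0 < β (u 0) ∧ ∀ i : Fin n, 0 < p (u i.castSucc) (u i.succ) := by
  constructor
  · rcases (hβ0 (u 0)).lt_or_eq with h' | h'
    · exact h'
    · exfalso
      unfold wordLaw at h
      rw [← h', zero_mul] at h
      exact lt_irrefl 0 h
  · intro i
    rcases (hp0 (u i.castSucc) (u i.succ)).lt_or_eq with h' | h'
    · exact h'
    · exfalso
      unfold wordLaw at h
      rw [Finset.prod_eq_zero (Finset.mem_univ i) h'.symm, mul_zero] at h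
      exact lt_irrefl 0 h

lemma pairEmp_apply {m : ℕ} (u : Fin (m + 2) → S) (z : S × S) :
    (pairEmp u).toFun z
      = (∑ i : Fin (m + 1), if (u i.castSucc, u i.succ) = z then (1 : ℝ) else 0) / (m + 1) :=
  rfl

lemma pairEmp_eq_zero {m : ℕ} (u : Fin (m + 2) → S) (z : S × S)
    (h : ∀ i : Fin (m + 1), (u i.castSucc, u i.succ) ≠ z) : (pairEmp u).toFun z = 0 := by
  rw [pairEmp_apply, Finset.sum_eq_zero (fun i _ => if_neg (h i))]
  simp

lemma pairEmp_ne_zero_exists {m : ℕ} (u : Fin (m + 2) → S) (z : S × S)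
    (h : (pairEmp u).toFun z ≠ 0) : ∃ i : Fin (m + 1), (u i.castSucc, u i.succ) = z := by
  by_contra hc
  push_neg at hc
  exact h (pairEmp_eq_zero u z hc)

lemma pairEmp_le_one_div {m : ℕ} (u : Fin (m + 2) → S) (z : S × S)
    (h : ∀ i j : Fin (m + 1),
      (u i.castSucc, u i.succ) = z → (u j.castSucc, u j.succ) = z → i = j) :
    (pairEmp u).toFun z ≤ 1 / (m + 1) := by
  classical
  rw [pairEmp_apply, Finset.sum_boole]
  have hcard : (Finset.univ.filter fun i : Fin (m + 1) => (u i.castSucc, u i.succ) = z).card ≤ 1 :=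
    Finset.card_le_one.mpr fun i hi j hj =>
      h i j (Finset.mem_filter.mp hi).2 (Finset.mem_filter.mp hj).2
  have hm : (0 : ℝ) < (m : ℝ) + 1 := by positivity
  gcongr
  exact_mod_cast hcard

lemma dist_eq' (ν₁ ν₂ : ProbMeas (S × S)) :
    dist ν₁ ν₂ = (∑' a, |ν₁.toFun a - ν₂.toFun a|) / 2 := rfl

lemma abs_apply_le_two_dist (ν₁ ν₂ : ProbMeas (S × S)) (z : S × S) :
    |ν₁.toFun z - ν₂.toFun z| ≤ 2 * dist ν₁ ν₂ := by
  rw [dist_eq']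
  have hs : Summable (fun a : S × S => |ν₁.toFun a - ν₂.toFun a|) :=
    (ν₁.hasSum_one'.summable.sub ν₂.hasSum_one'.summable).abs
  have h := Summable.le_tsum hs z (fun b _ => abs_nonneg _)
  linarith

lemma dist_ge_of_apply (L ν : ProbMeas (S × S)) (z : S × S) :
    (ν.toFun z - L.toFun z) / 2 ≤ dist L ν := by
  have h := abs_apply_le_two_dist L ν z
  have h2 : ν.toFun z - L.toFun z ≤ |L.toFun z - ν.toFun z| := by
    rw [abs_sub_comm]
    exact le_abs_self _
  linarith

lemma marg1_abs_le (ν₁ ν₂ : ProbMeas (S × S)) (x : S) :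
    |marg1 ν₁.toFun x - marg1 ν₂.toFun x| ≤ 2 * dist ν₁ ν₂ := by
  have hinj : Function.Injective (fun y : S => (x, y)) := fun a b h => by
    simpa using congrArg Prod.snd h
  have s1 : Summable (fun y => ν₁.toFun (x, y)) :=
    ν₁.hasSum_one'.summable.comp_injective hinj
  have s2 : Summable (fun y => ν₂.toFun (x, y)) :=
    ν₂.hasSum_one'.summable.comp_injective hinj
  have hdiff : marg1 ν₁.toFun x - marg1 ν₂.toFun x
      = ∑' y, (ν₁.toFun (x, y) - ν₂.toFun (x, y)) := (Summable.tsum_sub s1 s2).symm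
  rw [hdiff]
  have h1 : |∑' y, (ν₁.toFun (x, y) - ν₂.toFun (x, y))|
      ≤ ∑' y, |ν₁.toFun (x, y) - ν₂.toFun (x, y)| := by
    simpa [Real.norm_eq_abs] using norm_tsum_le_tsum_norm (f := fun y => ν₁.toFun (x, y) - ν₂.toFun (x, y)) (by simpa [Real.norm_eq_abs] using (s1.sub s2).abs)
  have h2 : (∑' y, |ν₁.toFun (x, y) - ν₂.toFun (x, y)|)
      ≤ ∑' z : S × S, |ν₁.toFun z - ν₂.toFun z| :=
    (s1.sub s2).abs.tsum_le_tsum_of_inj (fun y : S => (x, y)) hinj (fun z _ => abs_nonneg _)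
      (fun y => le_rfl)
      (ν₁.hasSum_one'.summable.sub ν₂.hasSum_one'.summable).abs
  have h3 : (∑' z : S × S, |ν₁.toFun z - ν₂.toFun z|) = 2 * dist ν₁ ν₂ := by
    rw [dist_eq']
    ring
  linarith

lemma marg2_abs_le (ν₁ ν₂ : ProbMeas (S × S)) (x : S) :
    |marg2 ν₁.toFun x - marg2 ν₂.toFun x| ≤ 2 * dist ν₁ ν₂ := by
  have hinj : Function.Injective (fun y : S => (y, x)) := fun a b h => by
    simpa using congrArg Prod.fst h
  have s1 : Summable (fun y => ν₁.toFun (y, x)) :=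
    ν₁.hasSum_one'.summable.comp_injective hinj
  have s2 : Summable (fun y => ν₂.toFun (y, x)) :=
    ν₂.hasSum_one'.summable.comp_injective hinj
  have hdiff : marg2 ν₁.toFun x - marg2 ν₂.toFun x
      = ∑' y, (ν₁.toFun (y, x) - ν₂.toFun (y, x)) := (Summable.tsum_sub s1 s2).symm
  rw [hdiff]
  have h1 : |∑' y, (ν₁.toFun (y, x) - ν₂.toFun (y, x))|
      ≤ ∑' y, |ν₁.toFun (y, x) - ν₂.toFun (y, x)| := by
    simpa [Real.norm_eq_abs] using norm_tsum_le_tsum_norm (f := fun y => ν₁.toFun (y, x) - ν₂.toFun (y, x)) (by simpa [Real.norm_eq_abs] using (s1.sub s2).abs)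
  have h2 : (∑' y, |ν₁.toFun (y, x) - ν₂.toFun (y, x)|)
      ≤ ∑' z : S × S, |ν₁.toFun z - ν₂.toFun z| :=
    (s1.sub s2).abs.tsum_le_tsum_of_inj (fun y : S => (y, x)) hinj (fun z _ => abs_nonneg _)
      (fun y => le_rfl)
      (ν₁.hasSum_one'.summable.sub ν₂.hasSum_one'.summable).abs
  have h3 : (∑' z : S × S, |ν₁.toFun z - ν₂.toFun z|) = 2 * dist ν₁ ν₂ := by
    rw [dist_eq']
    ring
  linarith

lemma tsum_pair_ite_fst (a b x : S) :
    ∑' y : S, (if (a, b) = (x, y) then (1 : ℝ) else 0) = if a = x then (1 : ℝ) else 0 := by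
  by_cases hax : a = x
  · subst hax
    have he : (fun y : S => if (a, b) = (a, y) then (1 : ℝ) else 0)
        = fun y => if y = b then (1 : ℝ) else 0 := by
      funext y
      by_cases h : y = b
      · subst h; simp
      · rw [if_neg (fun hh => h (congrArg Prod.snd hh).symm), if_neg h]
    rw [he, tsum_ite_eq b (fun _ => (1 : ℝ)), if_pos rfl]
  · have he : (fun y : S => if (a, b) = (x, y) then (1 : ℝ) else 0) = fun _ => (0 : ℝ) := by
      funext y
      rw [if_neg (fun hh => hax (congrArg Prod.fst hh))]
    rw [he, tsum_zero, if_neg hax]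

lemma tsum_pair_ite_snd (a b x : S) :
    ∑' y : S, (if (a, b) = (y, x) then (1 : ℝ) else 0) = if b = x then (1 : ℝ) else 0 := by
  by_cases hbx : b = x
  · subst hbx
    have he : (fun y : S => if (a, b) = (y, b) then (1 : ℝ) else 0)
        = fun y => if y = a then (1 : ℝ) else 0 := by
      funext y
      by_cases h : y = a
      · subst h; simp
      · rw [if_neg (fun hh => h (congrArg Prod.fst hh).symm), if_neg h]
    rw [he, tsum_ite_eq a (fun _ => (1 : ℝ)), if_pos rfl]
  · have he : (fun y : S => if (a, b) = (y, x) then (1 : ℝ) else 0) = fun _ => (0 : ℝ) := by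
      funext y
      rw [if_neg (fun hh => hbx (congrArg Prod.snd hh))]
    rw [he, tsum_zero, if_neg hbx]

lemma marg1_pairEmp {m : ℕ} (u : Fin (m + 2) → S) (x : S) :
    marg1 (pairEmp u).toFun x
      = (∑ i : Fin (m + 1), if u i.castSucc = x then (1 : ℝ) else 0) / (m + 1) := by
  have hsum : ∀ i : Fin (m + 1),
      Summable (fun y : S => if (u i.castSucc, u i.succ) = (x, y) then (1 : ℝ) else 0) := by
    intro i
    apply summable_of_ne_finset_zero (s := {u i.succ})
    intro y hy
    exact if_neg (fun hh => hy (Finset.mem_singleton.mpr (congrArg Prod.snd hh).symm))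
  show (∑' y : S,
      (∑ i : Fin (m + 1), if (u i.castSucc, u i.succ) = (x, y) then (1 : ℝ) else 0) / (m + 1)) = _
  rw [tsum_div_const]
  congr 1
  rw [Summable.tsum_finsetSum (fun i _ => hsum i)]
  exact Finset.sum_congr rfl fun i _ => tsum_pair_ite_fst _ _ _

lemma marg2_pairEmp {m : ℕ} (u : Fin (m + 2) → S) (x : S) :
    marg2 (pairEmp u).toFun x
      = (∑ i : Fin (m + 1), if u i.succ = x then (1 : ℝ) else 0) / (m + 1) := by
  have hsum : ∀ i : Fin (m + 1),
      Summable (fun y : S => if (u i.castSucc, u i.succ) = (y, x) then (1 : ℝ) else 0) := by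
    intro i
    apply summable_of_ne_finset_zero (s := {u i.castSucc})
    intro y hy
    exact if_neg (fun hh => hy (Finset.mem_singleton.mpr (congrArg Prod.fst hh).symm))
  show (∑' y : S,
      (∑ i : Fin (m + 1), if (u i.castSucc, u i.succ) = (y, x) then (1 : ℝ) else 0) / (m + 1)) = _
  rw [tsum_div_const]
  congr 1
  rw [Summable.tsum_finsetSum (fun i _ => hsum i)]
  exact Finset.sum_congr rfl fun i _ => tsum_pair_ite_snd _ _ _

lemma pairEmp_balance {m : ℕ} (u : Fin (m + 2) → S) (x : S) :
    |marg1 (pairEmp u).toFun x - marg2 (pairEmp u).toFun x| ≤ 1 / (m + 1) := by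
  rw [marg1_pairEmp, marg2_pairEmp, div_sub_div_same]
  have h1 : ∑ j : Fin (m + 2), (if u j = x then (1 : ℝ) else 0)
      = (∑ i : Fin (m + 1), if u i.castSucc = x then (1 : ℝ) else 0)
        + (if u (Fin.last (m + 1)) = x then (1 : ℝ) else 0) :=
    Fin.sum_univ_castSucc (f := fun j => if u j = x then (1 : ℝ) else 0)
  have h2 : ∑ j : Fin (m + 2), (if u j = x then (1 : ℝ) else 0)
      = (if u 0 = x then (1 : ℝ) else 0)
        + ∑ i : Fin (m + 1), (if u i.succ = x then (1 : ℝ) else 0) :=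
    Fin.sum_univ_succ (f := fun j => if u j = x then (1 : ℝ) else 0)
  have hnum : (∑ i : Fin (m + 1), if u i.castSucc = x then (1 : ℝ) else 0)
      - (∑ i : Fin (m + 1), if u i.succ = x then (1 : ℝ) else 0)
      = (if u 0 = x then (1 : ℝ) else 0) - (if u (Fin.last (m + 1)) = x then (1 : ℝ) else 0) := by
    linarith
  rw [hnum]
  have hmp : (0 : ℝ) < (m : ℝ) + 1 := by positivity
  rw [abs_div, abs_of_pos hmp]
  have hb : |(if u 0 = x then (1 : ℝ) else 0) - (if u (Fin.last (m + 1)) = x then (1 : ℝ) else 0)|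
      ≤ 1 := by
    split_ifs <;> norm_num
  gcongr

lemma gap_lemma (β : S → ℝ) (p : S → S → ℝ) (hβ0 : ∀ x, 0 ≤ β x) (hp0 : ∀ x y, 0 ≤ p x y)
    (μ : ProbMeas (S × S)) (hμ : ¬ (Admissible2 β p μ.toFun ∧ Balanced2 μ.toFun)) :
    ∃ δ : ℝ, 0 < δ ∧ ∃ N : ℕ, ∀ m : ℕ, N ≤ m → ∀ u : Fin (m + 2) → S,
      0 < wordLaw β p u → δ ≤ dist (pairEmp u) μ := by
  classical
  by_cases hbal : Balanced2 μ.toFun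
  · -- admissibility must fail
    have hadm : ¬ Admissible2 β p μ.toFun := fun h => hμ ⟨h, hbal⟩
    rw [Admissible2] at hadm
    by_cases h1 : ∀ z : S × S, 0 < μ.toFun z → ∃ C, IsIrredClass p C ∧ z.1 ∈ C ∧ z.2 ∈ C
    · by_cases h2 : ∀ C C', IsIrredClass p C → IsIrredClass p C' → ChargesClass2 μ.toFun C →
          ChargesClass2 μ.toFun C' → C = C' ∨ ClassReach p C C' ∨ ClassReach p C' C
      · -- subcase (iii): beta-reachability fails
        have h3 : ¬ ∀ C, IsIrredClass p C → ChargesClass2 μ.toFun C → BetaReachClass β p C :=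
          fun h3 => hadm ⟨h1, h2, h3⟩
        push_neg at h3
        obtain ⟨C, hC, hch, hnb⟩ := h3
        obtain ⟨z, hz, hz1, hz2⟩ := hch
        refine ⟨μ.toFun z / 2, by positivity, 0, fun m _ u hw => ?_⟩
        obtain ⟨hβpos, hs⟩ := wordLaw_pos_parts hβ0 hp0 hw
        have hzero : (pairEmp u).toFun z = 0 := by
          apply pairEmp_eq_zero
          intro i hpair
          have hx : u i.castSucc = z.1 := congrArg Prod.fst hpair
          exfalso
          by_cases hi0 : (i : ℕ) = 0
          · have e0 : i.castSucc = (0 : Fin (m + 2)) := Fin.ext (by simp [hi0])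
            exact hnb ⟨z.1, hz1, Or.inl (by rw [← hx, e0]; exact hβpos)⟩
          · have hseg := tg_seg hs (i : ℕ) (by omega) 0 (Nat.pos_of_ne_zero hi0)
            have e0 : (⟨0, by omega⟩ : Fin (m + 2)) = 0 := Fin.ext (by simp)
            have e2 : (⟨(i : ℕ), by omega⟩ : Fin (m + 2)) = i.castSucc := Fin.ext (by simp)
            rw [e0, e2, hx] at hseg
            exact hnb ⟨z.1, hz1, Or.inr ⟨u 0, hβpos, reach_of_tg hseg⟩⟩
        have hd := dist_ge_of_apply (pairEmp u) μ z
        rw [hzero] at hd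
        linarith
      · -- subcase (ii): total order fails
        push_neg at h2
        obtain ⟨C, C', hC, hC', hch, hch', hne, hr1, hr2⟩ := h2
        obtain ⟨z, hz, hzC1, hzC2⟩ := hch
        obtain ⟨w, hwpos, hwC1, hwC2⟩ := hch'
        refine ⟨min (μ.toFun z) (μ.toFun w) / 2, by positivity, 0, fun m _ u hwl => ?_⟩
        obtain ⟨hβpos, hs⟩ := wordLaw_pos_parts hβ0 hp0 hwl
        have hclaim : (pairEmp u).toFun z = 0 ∨ (pairEmp u).toFun w = 0 := by
          by_contra hcc
          push_neg at hcc
          obtain ⟨i, hi⟩ := pairEmp_ne_zero_exists u z hcc.1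
          obtain ⟨j, hj⟩ := pairEmp_ne_zero_exists u w hcc.2
          have hiz1 : u i.castSucc = z.1 := congrArg Prod.fst hi
          have hiz2 : u i.succ = z.2 := congrArg Prod.snd hi
          have hjw1 : u j.castSucc = w.1 := congrArg Prod.fst hj
          have hjw2 : u j.succ = w.2 := congrArg Prod.snd hj
          rcases le_or_gt (i : ℕ) (j : ℕ) with hle | hlt
          · have hseg := tg_seg hs ((j : ℕ) + 1) (by omega) (i : ℕ) (by omega)
            have e1 : (⟨(i : ℕ), by omega⟩ : Fin (m + 2)) = i.castSucc := Fin.ext (by simp)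
            have e2 : (⟨(j : ℕ) + 1, by omega⟩ : Fin (m + 2)) = j.succ := Fin.ext (by simp)
            rw [e1, e2, hiz1, hjw2] at hseg
            exact hr1 ⟨z.1, hzC1, w.2, hwC2, reach_of_tg hseg⟩
          · have hseg := tg_seg hs ((i : ℕ) + 1) (by omega) (j : ℕ) (by omega)
            have e1 : (⟨(j : ℕ), by omega⟩ : Fin (m + 2)) = j.castSucc := Fin.ext (by simp)
            have e2 : (⟨(i : ℕ) + 1, by omega⟩ : Fin (m + 2)) = i.succ := Fin.ext (by simp)
            rw [e1, e2, hjw1, hiz2] at hseg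
            exact hr2 ⟨w.1, hwC1, z.2, hzC2, reach_of_tg hseg⟩
        rcases hclaim with h0 | h0
        · have hd := dist_ge_of_apply (pairEmp u) μ z
          rw [h0] at hd
          have := min_le_left (μ.toFun z) (μ.toFun w)
          linarith
        · have hd := dist_ge_of_apply (pairEmp u) μ w
          rw [h0] at hd
          have := min_le_right (μ.toFun z) (μ.toFun w)
          linarith
    · -- subcase (i): support condition fails
      push_neg at h1
      obtain ⟨z, hz, hnoC⟩ := h1
      obtain ⟨x, y⟩ := z
      set ε := μ.toFun (x, y) with hε
      obtain ⟨N, hN⟩ := exists_nat_gt (2 / ε)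
      refine ⟨ε / 4, by positivity, N, fun m hm u hw => ?_⟩
      obtain ⟨hβpos, hs⟩ := wordLaw_pos_parts hβ0 hp0 hw
      have key : ∀ i j : Fin (m + 1), (i : ℕ) < (j : ℕ) →
          (u i.castSucc, u i.succ) = (x, y) → (u j.castSucc, u j.succ) = (x, y) → False := by
        intro i j hij hi hj
        have hx1 : u i.castSucc = x := congrArg Prod.fst hi
        have hy1 : u i.succ = y := congrArg Prod.snd hi
        have hx2 : u j.castSucc = x := congrArg Prod.fst hj
        have hpxy : 0 < p x y := by rw [← hx1, ← hy1]; exact hs i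
        have htg_xy : Relation.TransGen (fun a b => 0 < p a b) x y :=
          Relation.TransGen.single hpxy
        have htg_yx : Relation.TransGen (fun a b => 0 < p a b) y x := by
          rcases eq_or_lt_of_le (Nat.succ_le_of_lt hij) with he | hl2
          · have hee : u i.succ = u j.castSucc := congrArg u (Fin.ext (by simp; omega))
            have hyx : y = x := by rw [← hy1, hee, hx2]
            rw [hyx] at htg_xy ⊢
            exact htg_xy
          · have hseg := tg_seg hs (j : ℕ) (by omega) ((i : ℕ) + 1) hl2
            have e1 : (⟨(i : ℕ) + 1, by omega⟩ : Fin (m + 2)) = i.succ := Fin.ext (by simp)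
            have e2 : (⟨(j : ℕ), by omega⟩ : Fin (m + 2)) = j.castSucc := Fin.ext (by simp)
            rw [e1, e2, hy1, hx2] at hseg
            exact hseg
        set C : Set S := {w | Relation.TransGen (fun a b => 0 < p a b) x w ∧
          Relation.TransGen (fun a b => 0 < p a b) w x} with hCdef
        have hxx := htg_xy.trans htg_yx
        have hxC : x ∈ C := ⟨hxx, hxx⟩
        have hyC : y ∈ C := ⟨htg_xy, htg_yx⟩
        have hirr : IsIrredClass p C := by
          refine ⟨⟨x, hxC⟩, ?_, ?_⟩
          · intro a ha b hb
            exact reach_of_tg (ha.2.trans hb.1)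
          · intro C' hC' hsub
            refine Set.Subset.antisymm (fun w hw' => ?_) hsub
            exact ⟨tg_of_reach (hC' x (hsub hxC) w hw'), tg_of_reach (hC' w hw' x (hsub hxC))⟩
        exact hnoC C hirr hxC hyC
      have huniq : ∀ i j : Fin (m + 1),
          (u i.castSucc, u i.succ) = (x, y) → (u j.castSucc, u j.succ) = (x, y) → i = j := by
        intro i j hi hj
        rcases lt_trichotomy (i : ℕ) (j : ℕ) with h | h | h
        · exact absurd (key i j h hi hj) (fun f => f)
        · exact Fin.ext h
        · exact absurd (key j i h hj hi) (fun f => f)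
      have hle := pairEmp_le_one_div u (x, y) huniq
      have hεpos : 0 < ε := hz
      have hm2 : 2 / ε < (m : ℝ) + 1 := by
        have : (N : ℝ) ≤ (m : ℝ) := Nat.cast_le.mpr hm
        linarith
      have hsmall : 1 / ((m : ℝ) + 1) < ε / 2 := by
        have := one_div_lt_one_div_of_lt (div_pos two_pos hεpos) hm2
        rwa [one_div_div] at this
      have hd := dist_ge_of_apply (pairEmp u) μ (x, y)
      rw [← hε] at hd
      linarith
  · -- unbalanced case
    have hx : ∃ x, marg1 μ.toFun x ≠ marg2 μ.toFun x := by
      by_contra hc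
      push_neg at hc
      exact hbal (funext hc)
    obtain ⟨x, hxne⟩ := hx
    set ε := |marg1 μ.toFun x - marg2 μ.toFun x| with hε
    have hεpos : 0 < ε := abs_pos.mpr (sub_ne_zero.mpr hxne)
    obtain ⟨N, hN⟩ := exists_nat_gt (2 / ε)
    refine ⟨ε / 8, by positivity, N, fun m hm u _ => ?_⟩
    set L := pairEmp u with hL
    have t1 : |marg1 μ.toFun x - marg1 L.toFun x| ≤ 2 * dist L μ := by
      rw [abs_sub_comm]
      exact marg1_abs_le L μ x
    have t2 : |marg1 L.toFun x - marg2 L.toFun x| ≤ 1 / ((m : ℝ) + 1) := pairEmp_balance u x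
    have t3 : |marg2 L.toFun x - marg2 μ.toFun x| ≤ 2 * dist L μ := marg2_abs_le L μ x
    have tri : ε ≤ |marg1 μ.toFun x - marg1 L.toFun x| + |marg1 L.toFun x - marg2 L.toFun x|
        + |marg2 L.toFun x - marg2 μ.toFun x| := by
      rw [hε]
      have a1 := abs_sub_le (marg1 μ.toFun x) (marg1 L.toFun x) (marg2 μ.toFun x)
      have a2 := abs_sub_le (marg1 L.toFun x) (marg2 L.toFun x) (marg2 μ.toFun x)
      linarith
    have hm2 : 2 / ε < (m : ℝ) + 1 := by
      have : (N : ℝ) ≤ (m : ℝ) := Nat.cast_le.mpr hm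
      linarith
    have hsmall : 1 / ((m : ℝ) + 1) < ε / 2 := by
      have := one_div_lt_one_div_of_lt (div_pos two_pos hεpos) hm2
      rwa [one_div_div] at this
    linarith

end Statement9Aux


/-- **Theorem (`I⁽²⁾` is infinite outside `𝒜⁽²⁾_bal`).** For every `μ ∈ P(S²)` which is
not an admissible balanced measure, `I⁽²⁾(μ) = ∞`; equivalently,
`lim_{δ→0} limsup_n (1/n) log ℙ(L_n ∈ B(μ,δ)) = -∞` (a monotone limit, i.e. the
infimum over `δ > 0`). -/
theorem statement9 {S : Type*} [Countable S] [DecidableEq S]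
    (β : S → ℝ) (p : S → S → ℝ)
    (hβ0 : ∀ x, 0 ≤ β x) (hβ1 : HasSum β 1)
    (hp0 : ∀ x y, 0 ≤ p x y) (hp1 : ∀ x, HasSum (p x) 1)
    (I2 : ProbMeas (S × S) → EReal)
    (hI2 : WeakLDP (pairProbSeq β p) I2)
    (μ : ProbMeas (S × S))
    (hμ : ¬ (Admissible2 β p μ.toFun ∧ Balanced2 μ.toFun)) :
    I2 μ = ⊤ ∧
    (⨅ δ : {d : ℝ // 0 < d},
        Filter.limsup
          (fun n : ℕ => ((n : ℝ)⁻¹ : EReal) * elog (pairProbSeq β p (Metric.ball μ δ.1) n))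
          Filter.atTop) = ⊥ := by
  classical
  obtain ⟨δ, hδ, N, hgap⟩ := gap_lemma β p hβ0 hp0 μ hμ
  have hzero : ∀ m : ℕ, N ≤ m → pairProbSeq β p (Metric.ball μ δ) (m + 1) = 0 := by
    intro m hm
    show (∑' u : Fin (m + 2) → S,
        Set.indicator {u : Fin (m + 2) → S | pairEmp u ∈ Metric.ball μ δ}
          (fun u => wordLaw β p u) u) = 0
    have hterm : ∀ u : Fin (m + 2) → S,
        Set.indicator {u : Fin (m + 2) → S | pairEmp u ∈ Metric.ball μ δ}
          (fun u => wordLaw β p u) u = 0 := by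
      intro u
      by_cases hu : u ∈ {u : Fin (m + 2) → S | pairEmp u ∈ Metric.ball μ δ}
      · rw [Set.indicator_of_mem hu]
        by_contra hne
        have hwpos : 0 < wordLaw β p u :=
          lt_of_le_of_ne (wordLaw_nonneg hβ0 hp0 u) (Ne.symm hne)
        exact absurd (Metric.mem_ball.mp hu) (not_lt.mpr (hgap m hm u hwpos))
      · exact Set.indicator_of_notMem hu _
    exact (tsum_congr hterm).trans tsum_zero
  have hlim : Filter.limsup
      (fun n : ℕ => ((n : ℝ)⁻¹ : EReal) * elog (pairProbSeq β p (Metric.ball μ δ) n))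
      Filter.atTop = ⊥ := by
    have hev : (fun n : ℕ => ((n : ℝ)⁻¹ : EReal) * elog (pairProbSeq β p (Metric.ball μ δ) n))
        =ᶠ[Filter.atTop] (fun _ => (⊥ : EReal)) := by
      filter_upwards [Filter.eventually_ge_atTop (N + 1)] with n hn
      obtain ⟨m, rfl⟩ : ∃ m, n = m + 1 := ⟨n - 1, by omega⟩
      rw [hzero m (by omega)]
      have helog : elog (0 : ℝ) = ⊥ := by simp [elog]
      rw [helog]
      exact EReal.mul_bot_of_pos (by
        apply EReal.coe_pos.mpr
        positivity)
    rw [Filter.limsup_congr hev]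
    simp
  constructor
  · obtain ⟨_, _, _, hlow⟩ := hI2
    have h1 := hlow (Metric.ball μ δ) Metric.isOpen_ball
    have h2 : Filter.liminf
        (fun n : ℕ => ((n : ℝ)⁻¹ : EReal) * elog (pairProbSeq β p (Metric.ball μ δ) n))
        Filter.atTop ≤ ⊥ := hlim ▸ Filter.liminf_le_limsup
    have h3 : -(⨅ x ∈ Metric.ball μ δ, I2 x) = ⊥ := le_bot_iff.mp (h1.trans h2)
    have h4 : (⨅ x ∈ Metric.ball μ δ, I2 x) = ⊤ := EReal.neg_eq_bot_iff.mp h3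
    have h5 : (⨅ x ∈ Metric.ball μ δ, I2 x) ≤ I2 μ := iInf₂_le μ (Metric.mem_ball_self hδ)
    exact top_le_iff.mp (h4 ▸ h5)
  · refine le_bot_iff.mp ?_
    exact (iInf_le _ (⟨δ, hδ⟩ : {d : ℝ // 0 < d})).trans hlim.le


end

end MCLD
end

section
/- Let t ∈ ℕ and let v = (v^1, …, v^{k_v}) be a stitchable list of words of total length |v| = Σ_i |v^i| ≥ t+1. Then ‖M[G_t(v)] − Σ_{i=1}^{k_v} M[v^i]‖_TV ≤ |v| − (t+1) + 2 k_v τ. -/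
open Filter Topology Set MeasureTheory

namespace MCLD

noncomputable section

variable {S : Type*} [Countable S] [DecidableEq S]

/-- Probability `p(u)` of a finite word (product of the transition probabilities along
the word; `p(u) = 1` for words of length `≤ 1`). -/
def listProb (p : S → S → ℝ) : List S → ℝ
  | [] => 1
  | [_] => 1
  | x :: y :: t => p x y * listProb p (y :: t)

/-- `ℙ_{|u|}(u) = β(u₁) p(u)`. -/
def listLaw (β : S → ℝ) (p : S → S → ℝ) (u : List S) : ℝ :=
  (u.head?.elim 1 β) * listProb p u

/-- The pair-counting measure `M[u] = Σ_{i<|u|-1} δ_{(u_i,u_{i+1})}` of a finite word. -/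
def pairCountL : List S → S × S → ℝ
  | [], _ => 0
  | [_], _ => 0
  | x :: y :: t, z => (if (x, y) = z then (1 : ℝ) else 0) + pairCountL (y :: t) z

/-- Total variation norm (ℓ¹ norm) of a signed measure given by a function. -/
def tvNorm {α : Type*} (f : α → ℝ) : ℝ := ∑' a, |f a|

/-- Mass `f(A)` of the set `A` under the (nonnegative) measure given by `f`. -/
def setMass {α : Type*} (f : α → ℝ) (A : Set α) : ℝ := ∑' a, Set.indicator A f a

/-- `w` is the largest (contiguous) subword of `u` whose first and last letters lie in
`Kj`: the prefix before `w` and the suffix after `w` contain no letter of `Kj`, and `w`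
is either empty or has first and last letter in `Kj`. This characterises the slicing
map `F`: `F(u)_j = w`. -/
def IsSlice (Kj : Set S) (u w : List S) : Prop :=
  ∃ pre post : List S, u = pre ++ w ++ post ∧
    (∀ a ∈ pre, a ∉ Kj) ∧ (∀ a ∈ post, a ∉ Kj) ∧
    (w = [] ∨ ((∃ a, w.head? = some a ∧ a ∈ Kj) ∧ (∃ a, w.getLast? = some a ∧ a ∈ Kj)))

/-- Auxiliary for the stitching map: interleave the transition words `ξ` between the
entries of the list, keeping track of the last letter seen. -/
def stitchAux (ξ : S → S → List S) : S → List (List S) → List S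
  | _, [] => []
  | x, w :: t => (ξ x (w.head?.getD x) ++ w) ++ stitchAux ξ (w.getLast?.getD x) t

/-- `G(v) = z₀ ξ¹ v¹ ξ² v² ⋯ ξ^{k_v} v^{k_v}`. -/
def Gfull (z₀ : S) (ξ : S → S → List S) (v : List (List S)) : List S :=
  z₀ :: stitchAux ξ z₀ v

/-- The stitching map `G_t(v)`: the prefix of length `t+1` of `G(v)`. -/
def Gt (t : ℕ) (z₀ : S) (ξ : S → S → List S) (v : List (List S)) : List S :=
  (Gfull z₀ ξ v).take (t + 1)

/-- A list of non-empty words is stitchable if there is a monotone assignment of class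
indices such that the first and last letter of each entry lie in the corresponding
`K_j = C_j ∩ K`. -/
def Stitchable {r : ℕ} (C : Fin r → Set S) (K : Set S) (v : List (List S)) : Prop :=
  ∃ js : Fin v.length → Fin r, Monotone js ∧
    ∀ i : Fin v.length, ∃ a b : S,
      (v.get i).head? = some a ∧ (v.get i).getLast? = some b ∧
      a ∈ C (js i) ∧ a ∈ K ∧ b ∈ C (js i) ∧ b ∈ K

/-- Total length of a list of words. -/
def totalLen (v : List (List S)) : ℕ := (v.map List.length).sum

/-! ### Auxiliary lemmas for the geographic inequality -/

lemma pc_nonneg (l : List S) (z : S × S) : 0 ≤ pairCountL l z := by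
  induction l with
  | nil => simp [pairCountL]
  | cons x t ih =>
    cases t with
    | nil => simp [pairCountL]
    | cons y s =>
      have h : pairCountL (x :: y :: s) z
          = (if (x, y) = z then (1 : ℝ) else 0) + pairCountL (y :: s) z := rfl
      have h0 : (0 : ℝ) ≤ if (x, y) = z then (1 : ℝ) else 0 := by split <;> norm_num
      rw [h]; linarith

lemma pc_cons_le (x : S) (l : List S) (z : S × S) :
    pairCountL l z ≤ pairCountL (x :: l) z := by
  cases l with
  | nil => simp [pairCountL]
  | cons y s =>
    have h : pairCountL (x :: y :: s) z
        = (if (x, y) = z then (1 : ℝ) else 0) + pairCountL (y :: s) z := rfl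
    have h0 : (0 : ℝ) ≤ if (x, y) = z then (1 : ℝ) else 0 := by split <;> norm_num
    rw [h]; linarith

lemma pc_append_le (l1 l2 : List S) (z : S × S) :
    pairCountL l1 z + pairCountL l2 z ≤ pairCountL (l1 ++ l2) z := by
  induction l1 with
  | nil => simp [pairCountL]
  | cons x t ih =>
    cases t with
    | nil => simpa [pairCountL] using pc_cons_le x l2 z
    | cons y s =>
      have h1 : pairCountL (x :: y :: s) z
          = (if (x, y) = z then (1 : ℝ) else 0) + pairCountL (y :: s) z := rfl
      have h2 : pairCountL ((x :: y :: s) ++ l2) z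
          = (if (x, y) = z then (1 : ℝ) else 0) + pairCountL ((y :: s) ++ l2) z := rfl
      rw [h1, h2]
      linarith

lemma pc_take_le (l : List S) (m : ℕ) (z : S × S) :
    pairCountL (l.take m) z ≤ pairCountL l z := by
  conv_rhs => rw [← List.take_append_drop m l]
  have h1 := pc_append_le (l.take m) (l.drop m) z
  have h2 := pc_nonneg (l.drop m) z
  linarith

lemma pc_hasSum (l : List S) : HasSum (pairCountL l) (((l.length - 1 : ℕ) : ℝ)) := by
  induction l with
  | nil => simpa [pairCountL] using (hasSum_zero : HasSum (fun _ : S × S => (0 : ℝ)) 0)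
  | cons x t ih =>
    cases t with
    | nil => simpa [pairCountL] using (hasSum_zero : HasSum (fun _ : S × S => (0 : ℝ)) 0)
    | cons y s =>
      have h1 : HasSum (fun z : S × S => if (x, y) = z then (1 : ℝ) else 0) 1 := by
        simpa [eq_comm] using hasSum_ite_eq (x, y) (1 : ℝ)
      have h2 := h1.add ih
      have he : (fun z : S × S =>
          (if (x, y) = z then (1 : ℝ) else 0) + pairCountL (y :: s) z)
          = pairCountL (x :: y :: s) := rfl
      rw [he] at h2
      have hv : (((x :: y :: s).length - 1 : ℕ) : ℝ)
          = 1 + (((y :: s).length - 1 : ℕ) : ℝ) := by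
        simp [List.length_cons]
        ring
      rw [hv]
      exact h2

lemma pc_list_hasSum (v : List (List S)) :
    HasSum (fun z : S × S => (v.map (fun w => pairCountL w z)).sum)
      (((v.map (fun w => w.length - 1)).sum : ℕ) : ℝ) := by
  induction v with
  | nil => simpa using (hasSum_zero : HasSum (fun _ : S × S => (0 : ℝ)) 0)
  | cons w t ih =>
    have h := (pc_hasSum w).add ih
    have he : (fun z : S × S => pairCountL w z + (t.map (fun w => pairCountL w z)).sum)
        = fun z : S × S => ((w :: t).map (fun w => pairCountL w z)).sum := by
      funext z; simp
    rw [he] at h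
    have hv : ((((w :: t).map (fun w => w.length - 1)).sum : ℕ) : ℝ)
        = ((w.length - 1 : ℕ) : ℝ) + (((t.map (fun w => w.length - 1)).sum : ℕ) : ℝ) := by
      push_cast [List.map_cons, List.sum_cons]
      ring
    rw [hv]
    exact h

lemma sum_pred_add (v : List (List S)) (h : ∀ w ∈ v, w ≠ []) :
    (v.map (fun w => w.length - 1)).sum + v.length = totalLen v := by
  induction v with
  | nil => simp [totalLen]
  | cons w t ih =>
    have hw : 1 ≤ w.length := List.length_pos_iff.mpr (h w List.mem_cons_self)
    have ht := ih (fun u hu => h u (List.mem_cons_of_mem _ hu))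
    simp only [List.map_cons, List.sum_cons, totalLen, List.length_cons] at *
    omega

lemma stitchAux_len_ge (ξ : S → S → List S) :
    ∀ (v : List (List S)) (x : S), totalLen v ≤ (stitchAux ξ x v).length := by
  intro v
  induction v with
  | nil => intro x; simp [stitchAux, totalLen]
  | cons w t ih =>
    intro x
    have h : stitchAux ξ x (w :: t)
        = (ξ x (w.head?.getD x) ++ w) ++ stitchAux ξ (w.getLast?.getD x) t := rfl
    rw [h]
    have := ih (w.getLast?.getD x)
    simp only [List.length_append, totalLen, List.map_cons, List.sum_cons] at *
    omega

/-- Auxiliary chain predicate recording that each stitched transition word is short. -/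
def GoodChain (ξ : S → S → List S) (τ : ℕ) : S → List (List S) → Prop
  | _, [] => True
  | x, w :: t => w ≠ [] ∧ (ξ x (w.head?.getD x)).length + 1 ≤ τ ∧
      GoodChain ξ τ (w.getLast?.getD x) t

lemma stitchAux_len_le (ξ : S → S → List S) (τ : ℕ) :
    ∀ (v : List (List S)) (x : S), GoodChain ξ τ x v →
      (stitchAux ξ x v).length + v.length ≤ totalLen v + v.length * τ := by
  intro v
  induction v with
  | nil => intro x _; simp [stitchAux, totalLen]
  | cons w t ih =>
    intro x hg
    obtain ⟨-, h1, h2⟩ := hg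
    have h : stitchAux ξ x (w :: t)
        = (ξ x (w.head?.getD x) ++ w) ++ stitchAux ξ (w.getLast?.getD x) t := rfl
    rw [h]
    have h3 := ih (w.getLast?.getD x) h2
    simp only [List.length_append, List.length_cons, totalLen, List.map_cons,
      List.sum_cons, Nat.succ_mul] at *
    omega

lemma goodChain_nonempty (ξ : S → S → List S) (τ : ℕ) :
    ∀ (v : List (List S)) (x : S), GoodChain ξ τ x v → ∀ w ∈ v, w ≠ [] := by
  intro v
  induction v with
  | nil => intro x _ w hw; simp at hw
  | cons u t ih =>
    intro x hg w hw
    obtain ⟨h1, -, h3⟩ := hg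
    rcases List.mem_cons.mp hw with h | h
    · subst h; exact h1
    · exact ih _ h3 w h

lemma pc_stitch (ξ : S → S → List S) :
    ∀ (v : List (List S)) (x : S) (z : S × S),
      (v.map (fun w => pairCountL w z)).sum ≤ pairCountL (stitchAux ξ x v) z := by
  intro v
  induction v with
  | nil => intro x z; simp [stitchAux, pairCountL]
  | cons w t ih =>
    intro x z
    have h : stitchAux ξ x (w :: t)
        = (ξ x (w.head?.getD x) ++ w) ++ stitchAux ξ (w.getLast?.getD x) t := rfl
    rw [h, List.map_cons, List.sum_cons]
    have h1 := pc_append_le (ξ x (w.head?.getD x) ++ w) (stitchAux ξ (w.getLast?.getD x) t) z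
    have h2 := pc_append_le (ξ x (w.head?.getD x)) w z
    have h3 := pc_nonneg (ξ x (w.head?.getD x)) z
    have h4 := ih (w.getLast?.getD x) z
    linarith

lemma goodChain_of {r : ℕ} (C : Fin r → Set S) (K : Set S) (ξ : S → S → List S) (τ : ℕ)
    (hξ : ∀ j j' : Fin r, j ≤ j' → ∀ x, x ∈ C j → x ∈ K → ∀ y, y ∈ C j' → y ∈ K →
        (ξ x y).length + 1 ≤ τ) :
    ∀ (v : List (List S)) (x : S) (js : Fin v.length → Fin r), Monotone js →
      (∀ i : Fin v.length, ∃ a b : S,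
        (v.get i).head? = some a ∧ (v.get i).getLast? = some b ∧
        a ∈ C (js i) ∧ a ∈ K ∧ b ∈ C (js i) ∧ b ∈ K) →
      (∀ (h : 0 < v.length) (a : S), (v.get ⟨0, h⟩).head? = some a →
        (ξ x a).length + 1 ≤ τ) →
      GoodChain ξ τ x v := by
  intro v
  induction v with
  | nil => intro x js _ _ _; trivial
  | cons w t ih =>
    intro x js hmono hmem hx
    obtain ⟨a, b, ha, hb, haC, haK, hbC, hbK⟩ := hmem ⟨0, Nat.succ_pos _⟩
    have hget0 : (w :: t).get ⟨0, Nat.succ_pos _⟩ = w := rfl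
    rw [hget0] at ha hb
    have hwne : w ≠ [] := by intro hw; subst hw; simp at ha
    refine ⟨hwne, ?_, ?_⟩
    · have hhd : w.head?.getD x = a := by rw [ha]; rfl
      rw [hhd]
      exact hx (Nat.succ_pos _) a (by rw [hget0]; exact ha)
    · have hlb : w.getLast?.getD x = b := by rw [hb]; rfl
      rw [hlb]
      refine ih b (fun i => js i.succ)
        (fun i i' hii => hmono (Fin.succ_le_succ_iff.mpr hii)) ?_ ?_
      · intro i
        simpa using hmem i.succ
      · intro h a' ha'
        obtain ⟨a'', b'', ha'', hb'', ha''C, ha''K, -, -⟩ :=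
          hmem ((⟨0, h⟩ : Fin t.length).succ)
        have hgt : (w :: t).get ((⟨0, h⟩ : Fin t.length).succ) = t.get ⟨0, h⟩ := by
          simp
        rw [hgt] at ha''
        have haa : a' = a'' := by
          rw [ha'] at ha''
          exact Option.some.inj ha''
        subst haa
        have hle : js ⟨0, Nat.succ_pos _⟩ ≤ js ((⟨0, h⟩ : Fin t.length).succ) := by
          apply hmono
          simp [Fin.le_def]
        exact hξ _ _ hle b hbC hbK a' ha''C ha''K

/-- **Theorem (geographic inequality for the stitching map).** Let `t ∈ ℕ` and let
`v = (v¹, …, v^{k_v})` be a stitchable list of words of total length `|v| ≥ t+1`. Then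
`‖M[G_t(v)] - Σ_i M[v^i]‖_TV ≤ |v| - (t+1) + 2 k_v τ`. -/
theorem statement12 {S : Type*} [Countable S] [DecidableEq S]
    (β : S → ℝ) (p : S → S → ℝ)
    (hβ0 : ∀ x, 0 ≤ β x) (hβ1 : HasSum β 1)
    (hp0 : ∀ x y, 0 ≤ p x y) (hp1 : ∀ x, HasSum (p x) 1)
    {r : ℕ} (C : Fin r → Set S) (K : Finset S)
    (hclass : ∀ j, IsIrredClass p (C j))
    (hKj : ∀ j, (C j ∩ (↑K : Set S)).Nonempty)
    (horder : ∀ (i : ℕ) (h : i + 1 < r),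
        ClassReach p (C ⟨i, Nat.lt_of_succ_lt h⟩) (C ⟨i + 1, h⟩))
    (z₀ : S) (hz₀ : 0 < β z₀)
    (hz₀r : ∀ j' : Fin r, ∀ y ∈ C j' ∩ (↑K : Set S), Reach p z₀ y)
    (ξ : S → S → List S) (τ : ℕ)
    (hξ : ∀ j j' : Fin r, j ≤ j' → ∀ x ∈ C j ∩ (↑K : Set S), ∀ y ∈ C j' ∩ (↑K : Set S),
        0 < listProb p (x :: (ξ x y ++ [y])) ∧ (ξ x y).length + 1 ≤ τ)
    (hξ0 : ∀ j' : Fin r, ∀ y ∈ C j' ∩ (↑K : Set S),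
        0 < listProb p (z₀ :: (ξ z₀ y ++ [y])) ∧ (ξ z₀ y).length + 1 ≤ τ)
    (t : ℕ) (v : List (List S))
    (hstitch : Stitchable C (↑K : Set S) v)
    (hlen : t + 1 ≤ totalLen v) :
    tvNorm (fun z : S × S =>
        pairCountL (Gt t z₀ ξ v) z - ((v.map (fun w => pairCountL w z)).sum))
      ≤ (totalLen v : ℝ) - (t + 1) + 2 * v.length * τ := by
  classical
  obtain ⟨js, hmono, hmem⟩ := hstitch
  have hvne : v ≠ [] := by
    rintro rfl
    simp [totalLen] at hlen
  have hk : 1 ≤ v.length := List.length_pos_iff.mpr hvne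
  -- the good chain property
  have hξ' : ∀ j j' : Fin r, j ≤ j' → ∀ x, x ∈ C j → x ∈ (↑K : Set S) → ∀ y, y ∈ C j' →
      y ∈ (↑K : Set S) → (ξ x y).length + 1 ≤ τ := by
    intro j j' hjj x hx1 hx2 y hy1 hy2
    exact (hξ j j' hjj x ⟨hx1, hx2⟩ y ⟨hy1, hy2⟩).2
  have hgc : GoodChain ξ τ z₀ v := by
    refine goodChain_of C (↑K : Set S) ξ τ hξ' v z₀ js hmono hmem ?_
    intro h a ha
    obtain ⟨a', b', ha', hb', ha'C, ha'K, -, -⟩ := hmem ⟨0, h⟩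
    have : a = a' := by rw [ha] at ha'; exact Option.some.inj ha'
    subst this
    exact (hξ0 (js ⟨0, h⟩) a ⟨ha'C, ha'K⟩).2
  -- lengths
  set n := (stitchAux ξ z₀ v).length with hn
  have hnL : totalLen v ≤ n := stitchAux_len_ge ξ v z₀
  have hnU : n + v.length ≤ totalLen v + v.length * τ := stitchAux_len_le ξ τ v z₀ hgc
  have hGfull_len : (Gfull z₀ ξ v).length = n + 1 := by
    simp [Gfull, hn]
  have hGt_len : (Gt t z₀ ξ v).length = t + 1 := by
    rw [Gt, List.length_take, hGfull_len]
    omega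
  -- HasSum facts
  have hf : HasSum (pairCountL (Gt t z₀ ξ v)) ((t : ℝ)) := by
    have := pc_hasSum (Gt t z₀ ξ v)
    rw [hGt_len] at this
    simpa using this
  have hh : HasSum (pairCountL (Gfull z₀ ξ v)) ((n : ℝ)) := by
    have := pc_hasSum (Gfull z₀ ξ v)
    rw [hGfull_len] at this
    simpa using this
  have hg : HasSum (fun z : S × S => (v.map (fun w => pairCountL w z)).sum)
      ((totalLen v : ℝ) - v.length) := by
    have h1 := pc_list_hasSum v
    have h2 : (v.map (fun w => w.length - 1)).sum + v.length = totalLen v :=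
      sum_pred_add v (goodChain_nonempty ξ τ v z₀ hgc)
    have h3 : (((v.map (fun w => w.length - 1)).sum : ℕ) : ℝ)
        = (totalLen v : ℝ) - v.length := by
      rw [← h2]; push_cast; ring
    rwa [h3] at h1
  -- pointwise bounds
  have hfh : ∀ z : S × S, pairCountL (Gt t z₀ ξ v) z ≤ pairCountL (Gfull z₀ ξ v) z := by
    intro z
    exact pc_take_le (Gfull z₀ ξ v) (t + 1) z
  have hgh : ∀ z : S × S, (v.map (fun w => pairCountL w z)).sum
      ≤ pairCountL (Gfull z₀ ξ v) z := by
    intro z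
    have h1 := pc_stitch ξ v z₀ z
    have h2 := pc_cons_le z₀ (stitchAux ξ z₀ v) z
    calc (v.map (fun w => pairCountL w z)).sum ≤ pairCountL (stitchAux ξ z₀ v) z := h1
      _ ≤ pairCountL (z₀ :: stitchAux ξ z₀ v) z := h2
      _ = pairCountL (Gfull z₀ ξ v) z := rfl
  -- total variation bound
  have hmaj : HasSum (fun z : S × S =>
      (pairCountL (Gfull z₀ ξ v) z - pairCountL (Gt t z₀ ξ v) z) +
      (pairCountL (Gfull z₀ ξ v) z - (v.map (fun w => pairCountL w z)).sum))
      (((n : ℝ) - t) + ((n : ℝ) - ((totalLen v : ℝ) - v.length))) :=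
    (hh.sub hf).add (hh.sub hg)
  have hsub : Summable (fun z : S × S =>
      |pairCountL (Gt t z₀ ξ v) z - (v.map (fun w => pairCountL w z)).sum|) :=
    (hf.summable.sub hg.summable).abs
  have hle : tvNorm (fun z : S × S =>
      pairCountL (Gt t z₀ ξ v) z - ((v.map (fun w => pairCountL w z)).sum))
      ≤ ((n : ℝ) - t) + ((n : ℝ) - ((totalLen v : ℝ) - v.length)) := by
    rw [tvNorm]
    calc (∑' z : S × S, |pairCountL (Gt t z₀ ξ v) z - (v.map (fun w => pairCountL w z)).sum|)
        ≤ ∑' z : S × S, ((pairCountL (Gfull z₀ ξ v) z - pairCountL (Gt t z₀ ξ v) z) +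
            (pairCountL (Gfull z₀ ξ v) z - (v.map (fun w => pairCountL w z)).sum)) := by
          refine Summable.tsum_le_tsum (fun z => ?_) hsub hmaj.summable
          have h1 := hfh z
          have h2 := hgh z
          rw [abs_le]
          constructor <;> linarith
      _ = ((n : ℝ) - t) + ((n : ℝ) - ((totalLen v : ℝ) - v.length)) := hmaj.tsum_eq
  -- final arithmetic
  have c1 : (totalLen v : ℝ) ≤ (n : ℝ) := by exact_mod_cast hnL
  have c2 : (n : ℝ) + v.length ≤ (totalLen v : ℝ) + v.length * τ := by exact_mod_cast hnU
  have c3 : (1 : ℝ) ≤ v.length := by exact_mod_cast hk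
  have c4 : (t : ℝ) + 1 ≤ (totalLen v : ℝ) := by exact_mod_cast hlen
  linarith

end

end MCLD
end

section
/- Let t, k_*, l_* ∈ ℕ and let B^{(t)}_{k_*,l_*} be the set of stitchable lists v with total length t+1 ≤ |v| ≤ l_* and at most k_* entries. Then for every word w ∈ S^{t+1}: ℙ_{t+1}(w) ≥ c_st · Σ_{v ∈ B^{(t)}_{k_*,l_*}, G_t(v) = w} ∏_{i=1}^{k_v} p(v^i), where c_st = β(z₀) η^{k_*} (l_* + τ k_*)^{−2} (2k_*/(e(l_* + (τ+2)k_*)))^{2k_*}. -/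
open Filter Topology Set MeasureTheory

namespace MCLD

noncomputable section

variable {S : Type*} [Countable S] [DecidableEq S]

/-! ### Auxiliary lemmas for the stitching theorem -/

section AuxStitch

set_option linter.unusedSectionVars false

variable {S : Type*} [Countable S] [DecidableEq S]

theorem listProb_nonneg {p : S → S → ℝ} (hp0 : ∀ x y, 0 ≤ p x y) :
    ∀ u : List S, 0 ≤ listProb p u
  | [] => zero_le_one
  | [_] => zero_le_one
  | _ :: y :: t => mul_nonneg (hp0 _ _) (listProb_nonneg hp0 (y :: t))

theorem listProb_le_one {p : S → S → ℝ} (hp0 : ∀ x y, 0 ≤ p x y)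
    (hp1 : ∀ x y, p x y ≤ 1) : ∀ u : List S, listProb p u ≤ 1
  | [] => le_refl 1
  | [_] => le_refl 1
  | x :: y :: t =>
      mul_le_one₀ (hp1 x y) (listProb_nonneg hp0 _) (listProb_le_one hp0 hp1 (y :: t))

theorem listProb_cons_cons (p : S → S → ℝ) (x y : S) (t : List S) :
    listProb p (x :: y :: t) = p x y * listProb p (y :: t) := rfl

theorem listProb_append_cons (p : S → S → ℝ) :
    ∀ (A : List S) (a : S) (rest : List S),
      listProb p (A ++ a :: rest) = listProb p (A ++ [a]) * listProb p (a :: rest)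
  | [], a, rest => by simp [listProb]
  | [x], a, rest => by simp [listProb, listProb_cons_cons, mul_assoc]
  | x :: y :: A, a, rest => by
      have ih := listProb_append_cons p (y :: A) a rest
      simp only [List.cons_append, listProb_cons_cons] at ih ⊢
      rw [ih, mul_assoc]

theorem listProb_append_getLast (p : S → S → ℝ) (u : List S) (hu : u ≠ []) (rest : List S) :
    listProb p (u ++ rest) = listProb p u * listProb p (u.getLast hu :: rest) := by
  conv_lhs => rw [← List.dropLast_append_getLast hu]
  rw [List.append_assoc, List.singleton_append, listProb_append_cons,
    List.dropLast_append_getLast hu]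

/-- Sum of word probabilities over distinct continuations of a fixed length is at most 1. -/
theorem sum_listProb_le_one {p : S → S → ℝ} (hp0 : ∀ x y, 0 ≤ p x y)
    (hp1 : ∀ x, HasSum (p x) 1) :
    ∀ (L : ℕ) (x : S) (T : Finset (List S)), (∀ u ∈ T, u.length = L) →
      ∑ u ∈ T, listProb p (x :: u) ≤ 1 := by
  intro L
  induction L with
  | zero =>
      intro x T hT
      have hsub : T ⊆ {([] : List S)} := by
        intro u hu
        simp [List.length_eq_zero_iff.mp (hT u hu)]
      calc ∑ u ∈ T, listProb p (x :: u)
          ≤ ∑ u ∈ ({([] : List S)} : Finset (List S)), listProb p (x :: u) :=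
            Finset.sum_le_sum_of_subset_of_nonneg hsub
              (fun u _ _ => listProb_nonneg hp0 _)
        _ = 1 := by simp [listProb]
  | succ L ih =>
      intro x T hT
      classical
      set e : List S → S × List S := fun u => (u.headD x, u.tail) with he
      set g : S × List S → ℝ := fun z => p x z.1 * listProb p (z.1 :: z.2) with hg
      have hcons : ∀ u ∈ T, u = u.headD x :: u.tail := by
        intro u hu
        cases u with
        | nil => exact absurd (hT [] hu) (by simp)
        | cons b ub => simp
      have hinj : ∀ u ∈ T, ∀ u' ∈ T, e u = e u' → u = u' := by
        intro u hu u' hu' h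
        rw [hcons u hu, hcons u' hu']
        rw [he] at h
        simp only [Prod.mk.injEq] at h
        rw [h.1, h.2]
      have hsum1 : ∑ u ∈ T, listProb p (x :: u) = ∑ z ∈ T.image e, g z := by
        rw [Finset.sum_image hinj]
        refine Finset.sum_congr rfl fun u hu => ?_
        conv_lhs => rw [hcons u hu]
        rw [hg, he]
        simp [listProb_cons_cons]
      set T' := T.image e with hT'
      have hfib := Finset.sum_fiberwise_of_maps_to (s := T') (t := T'.image Prod.fst)
        (g := Prod.fst) (fun z hz => Finset.mem_image_of_mem Prod.fst hz) g
      have hinner : ∀ y ∈ T'.image Prod.fst,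
          ∑ z ∈ T'.filter (fun z => z.1 = y), g z ≤ p x y := by
        intro y _
        have hcg : ∀ z ∈ T'.filter (fun z => z.1 = y), g z
            = p x y * listProb p (y :: z.2) := by
          intro z hz
          rw [Finset.mem_filter] at hz
          show p x z.1 * listProb p (z.1 :: z.2) = p x y * listProb p (y :: z.2)
          rw [hz.2]
        rw [Finset.sum_congr rfl hcg, ← Finset.mul_sum]
        have hsnd : ∑ u' ∈ (T'.filter (fun z => z.1 = y)).image Prod.snd, listProb p (y :: u')
            = ∑ z ∈ T'.filter (fun z => z.1 = y), listProb p (y :: z.2) := by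
          refine Finset.sum_image ?_
          intro z hz z' hz' h
          rw [Finset.mem_coe, Finset.mem_filter] at hz hz'
          exact Prod.ext (hz.2.trans hz'.2.symm) h
        have hlen : ∀ u' ∈ (T'.filter (fun z => z.1 = y)).image Prod.snd,
            u'.length = L := by
          intro u' hu'
          rw [Finset.mem_image] at hu'
          obtain ⟨z, hz, hzu⟩ := hu'
          rw [Finset.mem_filter] at hz
          rw [hT', Finset.mem_image] at hz
          obtain ⟨u, hu, heu⟩ := hz.1
          have : u.tail = u' := by rw [← hzu, ← heu]
          have hul : u.length = L + 1 := hT u hu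
          rw [← this, List.length_tail, hul]
          omega
        have := ih y ((T'.filter (fun z => z.1 = y)).image Prod.snd) hlen
        rw [← hsnd]
        calc p x y * ∑ u' ∈ (T'.filter (fun z => z.1 = y)).image Prod.snd,
              listProb p (y :: u') ≤ p x y * 1 :=
            mul_le_mul_of_nonneg_left this (hp0 x y)
          _ = p x y := mul_one _
      calc ∑ u ∈ T, listProb p (x :: u) = ∑ z ∈ T', g z := hsum1
        _ = ∑ y ∈ T'.image Prod.fst, ∑ z ∈ T'.filter (fun z => z.1 = y), g z := hfib.symm
        _ ≤ ∑ y ∈ T'.image Prod.fst, p x y := Finset.sum_le_sum hinner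
        _ ≤ 1 := sum_le_hasSum _ (fun y _ => hp0 x y) (hp1 x)

/-- Lengths of the transition words used by `stitchAux`. -/
def xlens (ξ : S → S → List S) : S → List (List S) → List ℕ
  | _, [] => []
  | x, u :: t => (ξ x (u.head?.getD x)).length :: xlens ξ (u.getLast?.getD x) t

/-- A recursive version of stitchability, tracking the previous class. -/
def GoodFrom {r : ℕ} (C : Fin r → Set S) (K : Set S) : Option (Fin r) → List (List S) → Prop
  | _, [] => True
  | oj, u :: t => ∃ (j : Fin r) (a b : S), (∀ j0, oj = some j0 → j0 ≤ j) ∧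
      u.head? = some a ∧ u.getLast? = some b ∧
      a ∈ C j ∧ a ∈ K ∧ b ∈ C j ∧ b ∈ K ∧ GoodFrom C K (some j) t

theorem goodFrom_of_js {r : ℕ} (C : Fin r → Set S) (K : Set S) :
    ∀ (v : List (List S)) (js : Fin v.length → Fin r), Monotone js →
      (∀ i : Fin v.length, ∃ a b : S,
        (v.get i).head? = some a ∧ (v.get i).getLast? = some b ∧
        a ∈ C (js i) ∧ a ∈ K ∧ b ∈ C (js i) ∧ b ∈ K) →
      ∀ oj : Option (Fin r), (∀ j0, oj = some j0 → ∀ i, j0 ≤ js i) →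
      GoodFrom C K oj v
  | [], _, _, _, _, _ => trivial
  | u :: tl, js, hmono, hprop, oj, hoj => by
      obtain ⟨a, b, ha, hb, haC, haK, hbC, hbK⟩ := hprop ⟨0, Nat.succ_pos _⟩
      refine ⟨js ⟨0, Nat.succ_pos _⟩, a, b, fun j0 h => hoj j0 h _, ha, hb,
        haC, haK, hbC, hbK, ?_⟩
      refine goodFrom_of_js C K tl (fun i => js i.succ)
        (fun i i' hii => hmono (Fin.succ_le_succ_iff.mpr hii))
        (fun i => hprop i.succ) (some (js ⟨0, Nat.succ_pos _⟩)) ?_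
      rintro j0 h i
      injection h with h
      subst h
      exact hmono (by simp [Fin.le_def])

theorem xlens_length (ξ : S → S → List S) :
    ∀ (v : List (List S)) (x : S), (xlens ξ x v).length = v.length
  | [], _ => rfl
  | _ :: t, x => by simp [xlens, xlens_length ξ t]

theorem stitchAux_length (ξ : S → S → List S) :
    ∀ (v : List (List S)) (x : S),
      (stitchAux ξ x v).length = (xlens ξ x v).sum + totalLen v
  | [], x => by simp [stitchAux, xlens, totalLen]
  | u :: t, x => by
      show ((ξ x _ ++ u) ++ stitchAux ξ _ t).length = _
      rw [List.length_append, List.length_append, stitchAux_length ξ t]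
      simp [xlens, totalLen]
      ring

theorem stitchAux_inj (ξ : S → S → List S) :
    ∀ (v v' : List (List S)) (x : S), (∀ u ∈ v, u ≠ []) → (∀ u ∈ v', u ≠ []) →
      v.map List.length = v'.map List.length → xlens ξ x v = xlens ξ x v' →
      stitchAux ξ x v = stitchAux ξ x v' → v = v'
  | [], [], _, _, _, _, _, _ => rfl
  | [], _ :: _, _, _, _, hmap, _, _ => by simp at hmap
  | _ :: _, [], _, _, _, hmap, _, _ => by simp at hmap
  | u :: t, u' :: t', x, hne, hne', hmap, hxl, hst => by
      simp only [List.map_cons, List.cons.injEq] at hmap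
      obtain ⟨hlen_u, hmap'⟩ := hmap
      simp only [xlens, List.cons.injEq] at hxl
      obtain ⟨hxilen, hxl'⟩ := hxl
      simp only [stitchAux] at hst
      rw [List.append_assoc, List.append_assoc] at hst
      obtain ⟨hxi_eq, h2⟩ := List.append_inj hst hxilen
      obtain ⟨hu_eq, hst'⟩ := List.append_inj h2 hlen_u
      subst hu_eq
      have ht : t = t' := stitchAux_inj ξ t t' (u.getLast?.getD x)
        (fun w hw => hne w (List.mem_cons_of_mem _ hw))
        (fun w hw => hne' w (List.mem_cons_of_mem _ hw)) hmap' hxl' hst'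
      rw [ht]

theorem goodFrom_prob_le {r : ℕ} {C : Fin r → Set S} {Ks : Set S} {p : S → S → ℝ}
    (hp0 : ∀ x y, 0 ≤ p x y) {z₀ : S} {ξ : S → S → List S} {τ : ℕ} {η : ℝ} (hη0 : 0 ≤ η)
    (hξ : ∀ j j' : Fin r, j ≤ j' → ∀ x, x ∈ C j → x ∈ Ks → ∀ y, y ∈ C j' → y ∈ Ks →
        η ≤ listProb p (x :: (ξ x y ++ [y])) ∧ (ξ x y).length + 1 ≤ τ)
    (hξ0 : ∀ j' : Fin r, ∀ y, y ∈ C j' → y ∈ Ks →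
        η ≤ listProb p (z₀ :: (ξ z₀ y ++ [y])) ∧ (ξ z₀ y).length + 1 ≤ τ) :
    ∀ (v : List (List S)) (x : S) (oj : Option (Fin r)), GoodFrom C Ks oj v →
      ((x = z₀ ∧ oj = none) ∨ ∃ j0, oj = some j0 ∧ x ∈ C j0 ∧ x ∈ Ks) →
      (η ^ v.length * (v.map (listProb p)).prod ≤ listProb p (x :: stitchAux ξ x v)) ∧
      ∀ m ∈ xlens ξ x v, m + 1 ≤ τ
  | [], x, oj, _, _ => by
      constructor
      · simp [stitchAux, listProb]
      · simp [xlens]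
  | u :: tl, x, oj, hgood, hstart => by
      obtain ⟨j, a, b, hoj, ha, hb, haC, haK, hbC, hbK, hrest⟩ := hgood
      cases u with
      | nil => simp at ha
      | cons c ut =>
        have hca : c = a := by simpa using ha
        subst hca
        have hstep : η ≤ listProb p (x :: (ξ x c ++ [c])) ∧ (ξ x c).length + 1 ≤ τ := by
          rcases hstart with ⟨hxz, _⟩ | ⟨j0, hoj0, hxC, hxK⟩
          · subst hxz; exact hξ0 j c haC haK
          · exact hξ j0 j (hoj j0 hoj0) x hxC hxK c haC haK
        have ihres := goodFrom_prob_le hp0 hη0 hξ hξ0 tl b (some j) hrest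
          (Or.inr ⟨j, rfl, hbC, hbK⟩)
        have hglast : (c :: ut).getLast (List.cons_ne_nil c ut) = b := by
          have h := List.getLast?_eq_getLast (List.cons_ne_nil c ut)
          rw [hb] at h
          injection h with h
          exact h.symm
        have hsplit : listProb p (x :: stitchAux ξ x ((c :: ut) :: tl))
            = listProb p (x :: (ξ x c ++ [c]))
              * (listProb p (c :: ut) * listProb p (b :: stitchAux ξ b tl)) := by
          show listProb p (x :: ((ξ x ((c :: ut).head?.getD x) ++ (c :: ut))
              ++ stitchAux ξ ((c :: ut).getLast?.getD x) tl)) = _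
          simp only [List.head?_cons, Option.getD_some, hb]
          have e1 : x :: ((ξ x c ++ (c :: ut)) ++ stitchAux ξ b tl)
              = (x :: ξ x c) ++ (c :: (ut ++ stitchAux ξ b tl)) := by simp
          rw [e1, listProb_append_cons]
          have e2 : c :: (ut ++ stitchAux ξ b tl) = (c :: ut) ++ stitchAux ξ b tl := rfl
          rw [e2, listProb_append_getLast p (c :: ut) (List.cons_ne_nil c ut), hglast]
          have e3 : (x :: ξ x c) ++ [c] = x :: (ξ x c ++ [c]) := rfl
          rw [e3]
        constructor
        · rw [hsplit]
          have h1 : 0 ≤ listProb p (c :: ut) := listProb_nonneg hp0 _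
          have h2 : 0 ≤ (tl.map (listProb p)).prod := by
            refine List.prod_nonneg ?_
            intro y hy
            obtain ⟨u, _, rfl⟩ := List.mem_map.mp hy
            exact listProb_nonneg hp0 u
          have h3 : 0 ≤ listProb p (x :: (ξ x c ++ [c])) := listProb_nonneg hp0 _
          calc η ^ ((c :: ut) :: tl).length * (((c :: ut) :: tl).map (listProb p)).prod
              = (η * listProb p (c :: ut))
                * (η ^ tl.length * (tl.map (listProb p)).prod) := by
                simp only [List.length_cons, List.map_cons, List.prod_cons, pow_succ]
                ring
            _ ≤ (listProb p (x :: (ξ x c ++ [c])) * listProb p (c :: ut))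
                * listProb p (b :: stitchAux ξ b tl) :=
                mul_le_mul (mul_le_mul_of_nonneg_right hstep.1 h1) ihres.1
                  (mul_nonneg (pow_nonneg hη0 _) h2) (mul_nonneg h3 h1)
            _ = listProb p (x :: (ξ x c ++ [c]))
                * (listProb p (c :: ut) * listProb p (b :: stitchAux ξ b tl)) := by ring
        · intro m hm
          simp only [xlens, List.head?_cons, Option.getD_some, hb, List.mem_cons] at hm
          rcases hm with rfl | hm
          · exact hstep.2
          · exact ihres.2 m hm

/-- Encoding of a pair of length-lists into a strictly increasing list of partial sums. -/
def encN : ℕ → List ℕ → List ℕ → List ℕ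
  | s, m :: ms, n :: ns => (s + m + 1) :: (s + m + 1 + n) :: encN (s + m + 1 + n) ms ns
  | _, _, _ => []

theorem encN_length : ∀ (ms ns : List ℕ) (s : ℕ), ms.length = ns.length →
    (encN s ms ns).length = 2 * ms.length
  | [], [], _, _ => rfl
  | [], _ :: _, _, h => by simp at h
  | _ :: _, [], _, h => by simp at h
  | m :: ms, n :: ns, s, h => by
      simp only [encN, List.length_cons]
      rw [encN_length ms ns _ (by simpa using h)]
      ring

theorem encN_chain : ∀ (ms ns : List ℕ) (s : ℕ), ms.length = ns.length →
    (∀ n ∈ ns, 1 ≤ n) →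
    List.Chain (· < ·) s (encN s ms ns) ∧
      ∀ a ∈ encN s ms ns, a ≤ s + (ms.sum + ms.length + ns.sum)
  | [], [], s, _, _ => by simp [encN, List.Chain.nil]
  | [], _ :: _, _, h, _ => by simp at h
  | _ :: _, [], _, h, _ => by simp at h
  | m :: ms, n :: ns, s, h, hpos => by
      have hn : 1 ≤ n := hpos n List.mem_cons_self
      obtain ⟨hch, hbd⟩ := encN_chain ms ns (s + m + 1 + n) (by simpa using h)
        (fun n' hn' => hpos n' (List.mem_cons_of_mem _ hn'))
      constructor
      · exact List.Chain.cons (by omega) (List.Chain.cons (by omega) hch)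
      · intro a hamem
        simp only [encN, List.mem_cons] at hamem
        simp only [List.sum_cons, List.length_cons]
        rcases hamem with rfl | rfl | hamem
        · omega
        · omega
        · have := hbd a hamem
          omega

theorem encN_inj : ∀ (ms : List ℕ), ∀ (ns ms' ns' : List ℕ) (s : ℕ),
    ms.length = ns.length → ms'.length = ns'.length →
    encN s ms ns = encN s ms' ns' → ms = ms' ∧ ns = ns' := by
  intro ms
  induction ms with
  | nil =>
      intro ns ms' ns' s h h' he
      have hns : ns = [] := List.length_eq_zero_iff.mp h.symm
      subst hns
      cases ms' with
      | nil =>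
          have : ns' = [] := List.length_eq_zero_iff.mp h'.symm
          subst this
          exact ⟨rfl, rfl⟩
      | cons m' ms' =>
          cases ns' with
          | nil => simp at h'
          | cons n' ns' => simp [encN] at he
  | cons m ms ih =>
      intro ns ms' ns' s h h' he
      cases ns with
      | nil => simp at h
      | cons n ns =>
        cases ms' with
        | nil =>
            have : ns' = [] := List.length_eq_zero_iff.mp h'.symm
            subst this
            simp [encN] at he
        | cons m' ms' =>
          cases ns' with
          | nil => simp at h'
          | cons n' ns' =>
            simp only [encN, List.cons.injEq] at he
            obtain ⟨h1, h2, h3⟩ := he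
            have hm : m = m' := by omega
            subst hm
            have hn : n = n' := by omega
            subst hn
            obtain ⟨e1, e2⟩ := ih ns ms' ns' _ (by simpa using h) (by simpa using h') h3
            exact ⟨by rw [e1], by rw [e2]⟩

theorem choose_le_choose_add (n j d : ℕ) : n.choose j ≤ (n + d).choose (j + d) := by
  induction d with
  | zero => exact le_refl _
  | succ d ih =>
      calc n.choose j ≤ (n + d).choose (j + d) := ih
        _ ≤ (n + d + 1).choose (j + d + 1) := by
            rw [Nat.choose_succ_succ]
            exact Nat.le_add_right _ _

theorem pow_self_le_exp_mul_factorial : ∀ j : ℕ, (j : ℝ) ^ j ≤ Real.exp 1 ^ j * (j.factorial : ℝ)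
  | 0 => by simp
  | (j + 1) => by
      have ih := pow_self_le_exp_mul_factorial j
      have h1 : ((j : ℝ) + 1) ^ j ≤ Real.exp 1 * (j : ℝ) ^ j := by
        rcases Nat.eq_zero_or_pos j with rfl | hj
        · simpa using Real.one_le_exp (by norm_num)
        · have hj0 : (0 : ℝ) < j := by exact_mod_cast hj
          have key : ((j : ℝ) + 1) = (j : ℝ) * (1 + 1 / (j : ℝ)) := by field_simp
          rw [key, mul_pow]
          have h3 : 1 + 1 / (j : ℝ) ≤ Real.exp (1 / (j : ℝ)) := by
            have := Real.add_one_le_exp (1 / (j : ℝ)); linarith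
          have h2 : (1 + 1 / (j : ℝ)) ^ j ≤ Real.exp 1 := by
            calc (1 + 1 / (j : ℝ)) ^ j ≤ Real.exp (1 / (j : ℝ)) ^ j :=
                pow_le_pow_left₀ (by positivity) h3 j
              _ = Real.exp 1 := by
                rw [← Real.exp_nat_mul]
                congr 1
                field_simp
          calc (j : ℝ) ^ j * (1 + 1 / (j : ℝ)) ^ j ≤ (j : ℝ) ^ j * Real.exp 1 :=
              mul_le_mul_of_nonneg_left h2 (by positivity)
            _ = Real.exp 1 * (j : ℝ) ^ j := mul_comm _ _
      have hfac : (((j + 1).factorial : ℕ) : ℝ) = ((j : ℝ) + 1) * (j.factorial : ℝ) := by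
        rw [Nat.factorial_succ]
        push_cast
        ring
      calc ((j + 1 : ℕ) : ℝ) ^ (j + 1) = ((j : ℝ) + 1) * (((j : ℝ) + 1) ^ j) := by
            push_cast
            ring
        _ ≤ ((j : ℝ) + 1) * (Real.exp 1 * (j : ℝ) ^ j) :=
            mul_le_mul_of_nonneg_left h1 (by positivity)
        _ ≤ ((j : ℝ) + 1) * (Real.exp 1 * (Real.exp 1 ^ j * (j.factorial : ℝ))) :=
            mul_le_mul_of_nonneg_left
              (mul_le_mul_of_nonneg_left ih (le_of_lt (Real.exp_pos 1))) (by positivity)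
        _ = Real.exp 1 ^ (j + 1) * (((j + 1).factorial : ℕ) : ℝ) := by
            rw [hfac, pow_succ]
            ring

theorem choose_real_le (n j : ℕ) (hj : 1 ≤ j) :
    (n.choose j : ℝ) ≤ (Real.exp 1 * n / j) ^ j := by
  have h1 : (n.choose j : ℝ) ≤ (n : ℝ) ^ j / (j.factorial : ℝ) := by
    have := Nat.choose_le_pow_div (α := ℝ) j n
    push_cast at this ⊢
    exact this
  have hjpos : (0 : ℝ) < j := by exact_mod_cast hj
  have hfac : (0 : ℝ) < (j.factorial : ℝ) := by exact_mod_cast j.factorial_pos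
  have h2 := pow_self_le_exp_mul_factorial j
  have h3 : (Real.exp 1 * n / j) ^ j = Real.exp 1 ^ j * (n : ℝ) ^ j / (j : ℝ) ^ j := by
    rw [div_pow, mul_pow]
  refine h1.trans ?_
  rw [h3, div_le_div_iff₀ hfac (by positivity)]
  calc (n : ℝ) ^ j * (j : ℝ) ^ j ≤ (n : ℝ) ^ j * (Real.exp 1 ^ j * (j.factorial : ℝ)) :=
      mul_le_mul_of_nonneg_left h2 (by positivity)
    _ = Real.exp 1 ^ j * (n : ℝ) ^ j * (j.factorial : ℝ) := by ring

theorem sum_add_length_le (c : ℕ) : ∀ ms : List ℕ, (∀ m ∈ ms, m + 1 ≤ c) →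
    ms.sum + ms.length ≤ c * ms.length
  | [], _ => by simp
  | m :: ms, h => by
      have h1 := h m List.mem_cons_self
      have h2 := sum_add_length_le c ms (fun m' hm' => h m' (List.mem_cons_of_mem _ hm'))
      simp only [List.sum_cons, List.length_cons, Nat.mul_succ]
      omega

theorem sorted_lt_eq_sort {l : List ℕ} (hl : List.Pairwise (· < ·) l) :
    Finset.sort l.toFinset (· ≤ ·) = l :=
  (List.toFinset_sort (· ≤ ·) hl.nodup).mpr (hl.imp le_of_lt)

end AuxStitch

/-- **Theorem (probability inequality for the stitching map).** Let
`B^{(t)}_{k*,l*}` be the set of stitchable lists of total length between `t+1` and `l*`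
with at most `k*` entries. Then for every word `w ∈ S^{t+1}`,
`ℙ_{t+1}(w) ≥ c_st Σ_{v ∈ B, G_t(v) = w} ∏_i p(v^i)` with
`c_st = β(z₀) η^{k*} (l* + τ k*)⁻² (2k*/(e(l* + (τ+2)k*)))^{2k*}`,
where `η > 0` is a lower bound of the probabilities of the transition words and `τ` an
upper bound of their lengths. -/
theorem statement13 {S : Type*} [Countable S] [DecidableEq S]
    (β : S → ℝ) (p : S → S → ℝ)
    (hβ0 : ∀ x, 0 ≤ β x) (hβ1 : HasSum β 1)
    (hp0 : ∀ x y, 0 ≤ p x y) (hp1 : ∀ x, HasSum (p x) 1)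
    {r : ℕ} (C : Fin r → Set S) (K : Finset S)
    (hclass : ∀ j, IsIrredClass p (C j))
    (hKj : ∀ j, (C j ∩ (↑K : Set S)).Nonempty)
    (horder : ∀ (i : ℕ) (h : i + 1 < r),
        ClassReach p (C ⟨i, Nat.lt_of_succ_lt h⟩) (C ⟨i + 1, h⟩))
    (z₀ : S) (hz₀ : 0 < β z₀)
    (ξ : S → S → List S) (τ : ℕ) (η : ℝ) (hη : 0 < η)
    (hξ : ∀ j j' : Fin r, j ≤ j' → ∀ x ∈ C j ∩ (↑K : Set S), ∀ y ∈ C j' ∩ (↑K : Set S),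
        η ≤ listProb p (x :: (ξ x y ++ [y])) ∧ (ξ x y).length + 1 ≤ τ)
    (hξ0 : ∀ j' : Fin r, ∀ y ∈ C j' ∩ (↑K : Set S),
        η ≤ listProb p (z₀ :: (ξ z₀ y ++ [y])) ∧ (ξ z₀ y).length + 1 ≤ τ)
    (t kst lst : ℕ)
    (w : List S) (hw : w.length = t + 1) :
    β z₀ * η ^ kst * (((lst : ℝ) + τ * kst) ^ 2)⁻¹
        * ((2 * kst : ℝ) / (Real.exp 1 * ((lst : ℝ) + ((τ : ℝ) + 2) * kst))) ^ (2 * kst)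
        * (∑' v : {v : List (List S) // Stitchable C (↑K : Set S) v ∧
              t + 1 ≤ totalLen v ∧ totalLen v ≤ lst ∧ v.length ≤ kst ∧
              Gt t z₀ ξ v = w},
            ((v.1.map (listProb p)).prod))
      ≤ listLaw β p w := by
  classical
  have hlp_nonneg : ∀ u : List S, 0 ≤ listProb p u := listProb_nonneg hp0
  have hlaw_nonneg : 0 ≤ listLaw β p w := by
    have h0 : (0 : ℝ) ≤ w.head?.elim 1 β := by
      cases w with
      | nil => simp
      | cons a w' => simpa using hβ0 a
    exact mul_nonneg h0 (hlp_nonneg w)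
  by_cases hex : ∃ v : List (List S), Stitchable C (↑K : Set S) v ∧
      t + 1 ≤ totalLen v ∧ totalLen v ≤ lst ∧ v.length ≤ kst ∧ Gt t z₀ ξ v = w
  swap
  · haveI : IsEmpty {v : List (List S) // Stitchable C (↑K : Set S) v ∧
        t + 1 ≤ totalLen v ∧ totalLen v ≤ lst ∧ v.length ≤ kst ∧ Gt t z₀ ξ v = w} :=
      ⟨fun v => hex ⟨v.1, v.2⟩⟩
    rw [tsum_empty, mul_zero]
    exact hlaw_nonneg
  obtain ⟨v₀, hst₀, hlow₀, hhigh₀, hk₀, hGt₀⟩ := hex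
  have hv₀ne : v₀ ≠ [] := by
    intro h
    rw [h] at hlow₀
    simp [totalLen] at hlow₀
  have hv₀pos : 0 < v₀.length := List.length_pos_iff.mpr hv₀ne
  have hr : 0 < r := by
    obtain ⟨js, _, _⟩ := hst₀
    exact (js ⟨0, hv₀pos⟩).pos
  have hk1 : 1 ≤ kst := le_trans hv₀pos hk₀
  have hl1 : 1 ≤ lst := le_trans (le_trans (Nat.le_add_left 1 t) hlow₀) hhigh₀
  obtain ⟨y0, hy0⟩ := hKj ⟨0, hr⟩
  have hp1' : ∀ x y, p x y ≤ 1 := fun x y =>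
    le_hasSum (hp1 x) y (fun y' _ => hp0 x y')
  have hη1 : η ≤ 1 := le_trans (hξ0 ⟨0, hr⟩ y0 hy0).1 (listProb_le_one hp0 hp1' _)
  have hτ1 : 1 ≤ τ := le_trans (Nat.le_add_left 1 _) (hξ0 ⟨0, hr⟩ y0 hy0).2
  have hwne : w ≠ [] := by
    intro h
    rw [h] at hw
    simp at hw
  have hwhead : ∃ w', w = z₀ :: w' := by
    have h := hGt₀
    unfold Gt Gfull at h
    rw [List.take_succ_cons] at h
    exact ⟨_, h.symm⟩
  obtain ⟨w', hw'⟩ := hwhead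
  set wl := w.getLast hwne with hwl
  set X : ℕ := lst + (τ + 2) * kst with hX
  set Areal : ℝ := ((kst : ℝ) + 1) * ((X.choose (2 * kst) : ℕ) : ℝ) with hAreal
  -- reshaped transition hypotheses
  have hξ' : ∀ j j' : Fin r, j ≤ j' → ∀ x, x ∈ C j → x ∈ (↑K : Set S) →
      ∀ y, y ∈ C j' → y ∈ (↑K : Set S) →
      η ≤ listProb p (x :: (ξ x y ++ [y])) ∧ (ξ x y).length + 1 ≤ τ :=
    fun j j' hjj x hx1 hx2 y hy1 hy2 => hξ j j' hjj x ⟨hx1, hx2⟩ y ⟨hy1, hy2⟩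
  have hξ0' : ∀ j' : Fin r, ∀ y, y ∈ C j' → y ∈ (↑K : Set S) →
      η ≤ listProb p (z₀ :: (ξ z₀ y ++ [y])) ∧ (ξ z₀ y).length + 1 ≤ τ :=
    fun j' y hy1 hy2 => hξ0 j' y ⟨hy1, hy2⟩
  -- the core finite-sum estimate
  have hcore : ∀ F : Finset (List (List S)), (∀ v ∈ F, Stitchable C (↑K : Set S) v ∧
      t + 1 ≤ totalLen v ∧ totalLen v ≤ lst ∧ v.length ≤ kst ∧ Gt t z₀ ξ v = w) →
      η ^ kst * ∑ v ∈ F, ((v.map (listProb p)).prod) ≤ listProb p w * Areal := by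
    intro F hF
    have hne_entries : ∀ v ∈ F, ∀ u ∈ v, u ≠ [] := by
      intro v hv u hu h
      obtain ⟨js, hmono, hprop⟩ := (hF v hv).1
      obtain ⟨i, hi⟩ := List.mem_iff_get.mp hu
      obtain ⟨a, b, ha, _⟩ := hprop i
      rw [hi, h] at ha
      simp at ha
    have hgood : ∀ v ∈ F, GoodFrom C (↑K : Set S) none v := by
      intro v hv
      obtain ⟨js, hmono, hprop⟩ := (hF v hv).1
      exact goodFrom_of_js C _ v js hmono hprop none (by simp)
    have hL2 : ∀ v ∈ F,
        (η ^ v.length * (v.map (listProb p)).prod ≤ listProb p (z₀ :: stitchAux ξ z₀ v)) ∧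
        ∀ m ∈ xlens ξ z₀ v, m + 1 ≤ τ :=
      fun v hv => goodFrom_prob_le hp0 hη.le hξ' hξ0' v z₀ none (hgood v hv)
        (Or.inl ⟨rfl, rfl⟩)
    set tlf : List (List S) → List S := fun v => (Gfull z₀ ξ v).drop (t + 1) with htlf
    have hGsplit : ∀ v ∈ F, Gfull z₀ ξ v = w ++ tlf v := by
      intro v hv
      have h := (hF v hv).2.2.2.2
      unfold Gt at h
      conv_lhs => rw [← List.take_append_drop (t + 1) (Gfull z₀ ξ v)]
      rw [h]
    have hterm : ∀ v ∈ F, η ^ kst * (v.map (listProb p)).prod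
        ≤ listProb p w * listProb p (wl :: tlf v) := by
      intro v hv
      have hkv : v.length ≤ kst := (hF v hv).2.2.2.1
      have hprod0 : 0 ≤ (v.map (listProb p)).prod := by
        refine List.prod_nonneg ?_
        intro y hy
        obtain ⟨u, _, rfl⟩ := List.mem_map.mp hy
        exact hlp_nonneg u
      have h1 := (hL2 v hv).1
      have hsplit2 : listProb p (z₀ :: stitchAux ξ z₀ v)
          = listProb p w * listProb p (wl :: tlf v) := by
        have hzz : (z₀ :: stitchAux ξ z₀ v) = w ++ tlf v := hGsplit v hv
        rw [hzz, listProb_append_getLast p w hwne]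
      calc η ^ kst * (v.map (listProb p)).prod
          = η ^ (kst - v.length) * (η ^ v.length * (v.map (listProb p)).prod) := by
            rw [← mul_assoc, ← pow_add]
            congr 2
            omega
        _ ≤ 1 * (listProb p w * listProb p (wl :: tlf v)) :=
            mul_le_mul (pow_le_one₀ hη.le hη1) (h1.trans_eq hsplit2)
              (mul_nonneg (pow_nonneg hη.le _) hprod0) zero_le_one
        _ = _ := one_mul _
    set dataP : List (List S) → List ℕ × List ℕ :=
      fun v => (v.map List.length, xlens ξ z₀ v) with hdataP
    have hfibone : ∀ d ∈ F.image dataP,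
        ∑ v ∈ F.filter (fun v => dataP v = d), listProb p (wl :: tlf v) ≤ 1 := by
      intro d hd
      have hinj : ∀ v ∈ F.filter (fun v => dataP v = d),
          ∀ v' ∈ F.filter (fun v => dataP v = d), tlf v = tlf v' → v = v' := by
        intro v hv v' hv' htl
        have hv1 := Finset.mem_filter.mp hv
        have hv2 := Finset.mem_filter.mp hv'
        have hG : Gfull z₀ ξ v = Gfull z₀ ξ v' := by
          rw [hGsplit v hv1.1, hGsplit v' hv2.1, htl]
        have hstitch : stitchAux ξ z₀ v = stitchAux ξ z₀ v' := by
          unfold Gfull at hG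
          simpa using hG
        have hdd : dataP v = dataP v' := hv1.2.trans hv2.2.symm
        have hmap : v.map List.length = v'.map List.length := congrArg Prod.fst hdd
        have hxl : xlens ξ z₀ v = xlens ξ z₀ v' := congrArg Prod.snd hdd
        exact stitchAux_inj ξ v v' z₀ (hne_entries v hv1.1) (hne_entries v' hv2.1)
          hmap hxl hstitch
      have hse : ∑ u ∈ (F.filter (fun v => dataP v = d)).image tlf,
          listProb p (wl :: u)
          = ∑ v ∈ F.filter (fun v => dataP v = d), listProb p (wl :: tlf v) :=
        Finset.sum_image (g := tlf) (f := fun u => listProb p (wl :: u)) hinj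
      rw [← hse]
      refine sum_listProb_le_one hp0 hp1 (1 + d.2.sum + d.1.sum - (t + 1)) wl _ ?_
      intro u hu
      obtain ⟨v, hv, rfl⟩ := Finset.mem_image.mp hu
      have hv1 := Finset.mem_filter.mp hv
      have hlenG : (Gfull z₀ ξ v).length = 1 + d.2.sum + d.1.sum := by
        show (z₀ :: stitchAux ξ z₀ v).length = _
        rw [List.length_cons, stitchAux_length]
        have h1 : xlens ξ z₀ v = d.2 := congrArg Prod.snd hv1.2
        have h2 : v.map List.length = d.1 := congrArg Prod.fst hv1.2
        have h3 : totalLen v = d.1.sum := by rw [totalLen, h2]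
        rw [h1, h3]
        omega
      show ((Gfull z₀ ξ v).drop (t + 1)).length = _
      rw [List.length_drop, hlenG]
    have hmid : ∑ v ∈ F, listProb p (wl :: tlf v) ≤ ((F.image dataP).card : ℝ) := by
      rw [← Finset.sum_fiberwise_of_maps_to
        (fun v hv => Finset.mem_image_of_mem dataP hv)
        (fun v => listProb p (wl :: tlf v))]
      calc ∑ d ∈ F.image dataP, ∑ v ∈ F.filter (fun v => dataP v = d),
            listProb p (wl :: tlf v)
          ≤ ∑ _d ∈ F.image dataP, (1 : ℝ) := Finset.sum_le_sum hfibone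
        _ = ((F.image dataP).card : ℝ) := by
            rw [Finset.sum_const, nsmul_eq_mul, mul_one]
    have hcard : ((F.image dataP).card : ℝ) ≤ Areal := by
      set enc2 : List ℕ × List ℕ → List ℕ := fun d => encN 0 d.2 d.1 with henc2
      have hlen_eq : ∀ d ∈ F.image dataP, d.2.length = d.1.length := by
        intro d hd
        obtain ⟨v, hv, rfl⟩ := Finset.mem_image.mp hd
        show (xlens ξ z₀ v).length = (v.map List.length).length
        rw [xlens_length, List.length_map]
      have hinj2 : ∀ d ∈ F.image dataP, ∀ d' ∈ F.image dataP, enc2 d = enc2 d' → d = d' := by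
        intro d hd d' hd' h
        obtain ⟨ems, ens⟩ := encN_inj d.2 d.1 d'.2 d'.1 0 (hlen_eq d hd) (hlen_eq d' hd') h
        exact Prod.ext ens ems
      have hc1 : (F.image dataP).card = ((F.image dataP).image enc2).card :=
        (Finset.card_image_of_injOn hinj2).symm
      set M' : ℕ := lst + τ * kst with hM'
      set B : Finset (List ℕ) := (Finset.range (kst + 1)).biUnion
        (fun k => ((Finset.Icc 1 M').powersetCard (2 * k)).image
          (fun s => Finset.sort s (· ≤ ·))) with hB
      have hsub : (F.image dataP).image enc2 ⊆ B := by
        intro el hel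
        obtain ⟨d, hd, rfl⟩ := Finset.mem_image.mp hel
        obtain ⟨v, hv, rfl⟩ := Finset.mem_image.mp hd
        set ms := xlens ξ z₀ v with hms
        set ns := v.map List.length with hns
        have hms_len : ms.length = v.length := xlens_length ξ v z₀
        have hns_len : ns.length = v.length := List.length_map _
        have hlen : ms.length = ns.length := by rw [hms_len, hns_len]
        have hpos : ∀ n ∈ ns, 1 ≤ n := by
          intro n hn
          obtain ⟨u, hu, rfl⟩ := List.mem_map.mp hn
          exact List.length_pos_iff.mpr (hne_entries v hv u hu)
        obtain ⟨hch, hbd⟩ := encN_chain ms ns 0 hlen hpos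
        have hpw := List.isChain_iff_pairwise.mp hch
        have hsorted : List.Pairwise (· < ·) (encN 0 ms ns) := hpw.of_cons
        have hposel : ∀ a ∈ encN 0 ms ns, 0 < a :=
          fun a ha => List.rel_of_pairwise_cons hpw ha
        have hbdel : ∀ a ∈ encN 0 ms ns, a ≤ M' := by
          intro a ha
          have h1 := hbd a ha
          have h2 : ms.sum + ms.length ≤ τ * v.length := by
            rw [← hms_len]
            exact sum_add_length_le τ ms (hL2 v hv).2
          have h3 : ns.sum ≤ lst := by
            have he : ns.sum = totalLen v := rfl
            rw [he]
            exact (hF v hv).2.2.1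
          have h4 : τ * v.length ≤ τ * kst := Nat.mul_le_mul_left τ (hF v hv).2.2.2.1
          have h24 : ms.sum + ms.length ≤ τ * kst := h2.trans h4
          rw [hM']
          omega
        have hnodup : (encN 0 ms ns).Nodup := hsorted.imp ne_of_lt
        have hcardl : (encN 0 ms ns).toFinset.card = 2 * v.length := by
          rw [List.toFinset_card_of_nodup hnodup, encN_length ms ns 0 hlen, hms_len]
        have hsubIcc : (encN 0 ms ns).toFinset ⊆ Finset.Icc 1 M' := by
          intro a ha
          rw [List.mem_toFinset] at ha
          rw [Finset.mem_Icc]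
          exact ⟨hposel a ha, hbdel a ha⟩
        refine Finset.mem_biUnion.mpr ⟨v.length,
          Finset.mem_range.mpr (Nat.lt_succ_of_le (hF v hv).2.2.2.1), ?_⟩
        exact Finset.mem_image.mpr ⟨(encN 0 ms ns).toFinset,
          Finset.mem_powersetCard.mpr ⟨hsubIcc, hcardl⟩, sorted_lt_eq_sort hsorted⟩
      have hcardB : B.card ≤ (kst + 1) * X.choose (2 * kst) := by
        calc B.card ≤ ∑ k ∈ Finset.range (kst + 1),
              (((Finset.Icc 1 M').powersetCard (2 * k)).image
                (fun s => Finset.sort s (· ≤ ·))).card := Finset.card_biUnion_le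
          _ ≤ ∑ _k ∈ Finset.range (kst + 1), X.choose (2 * kst) := by
              refine Finset.sum_le_sum ?_
              intro k hk
              have hk' : k ≤ kst := Nat.lt_succ_iff.mp (Finset.mem_range.mp hk)
              have h1 : (((Finset.Icc 1 M').powersetCard (2 * k)).image
                  (fun s => Finset.sort s (· ≤ ·))).card
                  ≤ ((Finset.Icc 1 M').powersetCard (2 * k)).card :=
                Finset.card_image_le
              have h2 : ((Finset.Icc 1 M').powersetCard (2 * k)).card
                  = M'.choose (2 * k) := by
                rw [Finset.card_powersetCard, Nat.card_Icc]
                simp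
              have h3 : M'.choose (2 * k) ≤ X.choose (2 * kst) := by
                have hle := choose_le_choose_add M' (2 * k) (2 * kst - 2 * k)
                have he : 2 * k + (2 * kst - 2 * k) = 2 * kst := by omega
                rw [he] at hle
                have hXM : X = M' + 2 * kst := by rw [hX, hM']; ring
                refine hle.trans (Nat.choose_le_choose _ ?_)
                rw [hXM]
                omega
              calc (((Finset.Icc 1 M').powersetCard (2 * k)).image
                    (fun s => Finset.sort s (· ≤ ·))).card
                  ≤ ((Finset.Icc 1 M').powersetCard (2 * k)).card := h1
                _ = M'.choose (2 * k) := h2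
                _ ≤ X.choose (2 * kst) := h3
          _ = (kst + 1) * X.choose (2 * kst) := by
              rw [Finset.sum_const, Finset.card_range, smul_eq_mul]
      calc ((F.image dataP).card : ℝ) = (((F.image dataP).image enc2).card : ℝ) := by
            rw [hc1]
        _ ≤ (B.card : ℝ) := by exact_mod_cast Finset.card_le_card hsub
        _ ≤ (((kst + 1) * X.choose (2 * kst) : ℕ) : ℝ) := by exact_mod_cast hcardB
        _ = Areal := by rw [hAreal]; push_cast; ring
    calc η ^ kst * ∑ v ∈ F, (v.map (listProb p)).prod
        = ∑ v ∈ F, η ^ kst * (v.map (listProb p)).prod := Finset.mul_sum _ _ _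
      _ ≤ ∑ v ∈ F, listProb p w * listProb p (wl :: tlf v) := Finset.sum_le_sum hterm
      _ = listProb p w * ∑ v ∈ F, listProb p (wl :: tlf v) := (Finset.mul_sum _ _ _).symm
      _ ≤ listProb p w * ((F.image dataP).card : ℝ) :=
          mul_le_mul_of_nonneg_left hmid (hlp_nonneg w)
      _ ≤ listProb p w * Areal := mul_le_mul_of_nonneg_left hcard (hlp_nonneg w)
  -- from finite sums to the tsum
  have hηk : (0 : ℝ) < η ^ kst := pow_pos hη kst
  set D : ℝ := listProb p w * Areal / η ^ kst with hD
  have hAnn : (0 : ℝ) ≤ Areal := by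
    rw [hAreal]
    positivity
  have hDnn : 0 ≤ D := div_nonneg (mul_nonneg (hlp_nonneg w) hAnn) hηk.le
  have htsum : (∑' v : {v : List (List S) // Stitchable C (↑K : Set S) v ∧
      t + 1 ≤ totalLen v ∧ totalLen v ≤ lst ∧ v.length ≤ kst ∧ Gt t z₀ ξ v = w},
      ((v.1.map (listProb p)).prod)) ≤ D := by
    refine tsum_le_of_sum_le' hDnn ?_
    intro F
    have himg : ∑ v ∈ F, ((v.1.map (listProb p)).prod)
        = ∑ v ∈ F.image Subtype.val, ((v.map (listProb p)).prod) := by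
      rw [Finset.sum_image (fun a _ b _ h => Subtype.ext h)]
    rw [himg, hD, le_div_iff₀ hηk, mul_comm]
    refine hcore (F.image Subtype.val) ?_
    intro v hv
    obtain ⟨⟨v', hv'⟩, _, rfl⟩ := Finset.mem_image.mp hv
    exact hv'
  -- final arithmetic
  have hlstR : (1 : ℝ) ≤ (lst : ℝ) := by exact_mod_cast hl1
  have hkstR : (1 : ℝ) ≤ (kst : ℝ) := by exact_mod_cast hk1
  have hτR : (1 : ℝ) ≤ (τ : ℝ) := by exact_mod_cast hτ1
  have hq1pos : (0 : ℝ) < (lst : ℝ) + (τ : ℝ) * (kst : ℝ) := by nlinarith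
  have hYpos : (0 : ℝ) < (lst : ℝ) + ((τ : ℝ) + 2) * (kst : ℝ) := by nlinarith
  have h2kpos : (0 : ℝ) < 2 * (kst : ℝ) := by linarith
  have hXr : ((X : ℕ) : ℝ) = (lst : ℝ) + ((τ : ℝ) + 2) * (kst : ℝ) := by
    rw [hX]
    push_cast
    ring
  set Q : ℝ := Real.exp 1 * ((lst : ℝ) + ((τ : ℝ) + 2) * (kst : ℝ)) / (2 * (kst : ℝ))
    with hQ
  have hchooseQ : ((X.choose (2 * kst) : ℕ) : ℝ) ≤ Q ^ (2 * kst) := by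
    have h := choose_real_le X (2 * kst) (by omega)
    rw [hQ, ← hXr]
    convert h using 3
    push_cast
    ring
  have hMk : ((kst : ℝ) + 1) ≤ ((lst : ℝ) + (τ : ℝ) * (kst : ℝ)) ^ 2 := by
    have h1 : (kst : ℝ) ≤ (τ : ℝ) * (kst : ℝ) := by nlinarith
    have h2 : (kst : ℝ) + 1 ≤ (lst : ℝ) + (τ : ℝ) * (kst : ℝ) := by linarith
    have h3 : (1 : ℝ) ≤ (lst : ℝ) + (τ : ℝ) * (kst : ℝ) := by linarith
    calc (kst : ℝ) + 1 ≤ (lst : ℝ) + (τ : ℝ) * (kst : ℝ) := h2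
      _ ≤ ((lst : ℝ) + (τ : ℝ) * (kst : ℝ)) ^ 2 := le_self_pow₀ h3 (by omega)
  have hAq : Areal ≤ ((lst : ℝ) + (τ : ℝ) * (kst : ℝ)) ^ 2 * Q ^ (2 * kst) := by
    rw [hAreal]
    refine mul_le_mul hMk hchooseQ (by positivity) (by positivity)
  have hkey : ((2 * kst : ℝ) / (Real.exp 1 * ((lst : ℝ) + ((τ : ℝ) + 2) * kst))) ^ (2 * kst)
      * Q ^ (2 * kst) = 1 := by
    rw [← mul_pow, hQ]
    rw [show (2 * (kst : ℝ)) / (Real.exp 1 * ((lst : ℝ) + ((τ : ℝ) + 2) * (kst : ℝ)))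
        * (Real.exp 1 * ((lst : ℝ) + ((τ : ℝ) + 2) * (kst : ℝ)) / (2 * (kst : ℝ))) = 1 by
      field_simp]
    exact one_pow _
  have hbr : ((((lst : ℝ) + (τ : ℝ) * (kst : ℝ)) ^ 2)⁻¹
      * ((2 * kst : ℝ) / (Real.exp 1 * ((lst : ℝ) + ((τ : ℝ) + 2) * kst))) ^ (2 * kst))
      * Areal ≤ 1 := by
    have hq2nn : (0 : ℝ) ≤ ((2 * kst : ℝ)
        / (Real.exp 1 * ((lst : ℝ) + ((τ : ℝ) + 2) * kst))) ^ (2 * kst) := by positivity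
    calc ((((lst : ℝ) + (τ : ℝ) * (kst : ℝ)) ^ 2)⁻¹
          * ((2 * kst : ℝ) / (Real.exp 1 * ((lst : ℝ) + ((τ : ℝ) + 2) * kst))) ^ (2 * kst))
          * Areal
        ≤ ((((lst : ℝ) + (τ : ℝ) * (kst : ℝ)) ^ 2)⁻¹
          * ((2 * kst : ℝ) / (Real.exp 1 * ((lst : ℝ) + ((τ : ℝ) + 2) * kst))) ^ (2 * kst))
          * (((lst : ℝ) + (τ : ℝ) * (kst : ℝ)) ^ 2 * Q ^ (2 * kst)) :=
          mul_le_mul_of_nonneg_left hAq (by positivity)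
      _ = ((((lst : ℝ) + (τ : ℝ) * (kst : ℝ)) ^ 2)⁻¹ * (((lst : ℝ) + (τ : ℝ) * (kst : ℝ)) ^ 2))
          * (((2 * kst : ℝ) / (Real.exp 1 * ((lst : ℝ) + ((τ : ℝ) + 2) * kst))) ^ (2 * kst)
            * Q ^ (2 * kst)) := by ring
      _ = 1 := by
          rw [inv_mul_cancel₀ (by positivity), hkey, one_mul]
  have hpre_nn : (0 : ℝ) ≤ β z₀ * η ^ kst * (((lst : ℝ) + τ * kst) ^ 2)⁻¹
      * ((2 * kst : ℝ) / (Real.exp 1 * ((lst : ℝ) + ((τ : ℝ) + 2) * kst))) ^ (2 * kst) := by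
    have := hβ0 z₀
    positivity
  calc β z₀ * η ^ kst * (((lst : ℝ) + τ * kst) ^ 2)⁻¹
      * ((2 * kst : ℝ) / (Real.exp 1 * ((lst : ℝ) + ((τ : ℝ) + 2) * kst))) ^ (2 * kst)
      * (∑' v : {v : List (List S) // Stitchable C (↑K : Set S) v ∧
            t + 1 ≤ totalLen v ∧ totalLen v ≤ lst ∧ v.length ≤ kst ∧ Gt t z₀ ξ v = w},
          ((v.1.map (listProb p)).prod))
      ≤ β z₀ * η ^ kst * (((lst : ℝ) + τ * kst) ^ 2)⁻¹
        * ((2 * kst : ℝ) / (Real.exp 1 * ((lst : ℝ) + ((τ : ℝ) + 2) * kst))) ^ (2 * kst)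
        * D := mul_le_mul_of_nonneg_left htsum hpre_nn
    _ = (β z₀ * listProb p w)
        * (((((lst : ℝ) + (τ : ℝ) * (kst : ℝ)) ^ 2)⁻¹
          * ((2 * kst : ℝ) / (Real.exp 1 * ((lst : ℝ) + ((τ : ℝ) + 2) * kst))) ^ (2 * kst))
          * Areal) := by
        rw [hD]
        field_simp
    _ ≤ (β z₀ * listProb p w) * 1 :=
        mul_le_mul_of_nonneg_left hbr (mul_nonneg (hβ0 z₀) (hlp_nonneg w))
    _ = listLaw β p w := by
        rw [mul_one, hw']
        simp [listLaw]

end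

end MCLD
end
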